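/- arXiv:2506.14899 — 4 statements merged into one kernel-verified Lean document; each statement's English description precedes it below -/
import Mathlib

section
/- Let α ∈ (0,∞), τ ∈ (0,∞), s ∈ [0,∞], d ∈ ℕ, and P ∈ T^{d,s}_{α,τ}. Let g : [0,1]^d → ℝ be measurable and bounded with g(x) = sgn(2·η_P(x) − 1) for P_X-almost every x. Then: (i) the infimum of R_P^{φ_h}(f) over all bounded measurable f : [0,1]^d → ℝ equals R_P^{φ_h}(g); and (ii) for every measurable f : [0,1]^d → [−1,1], ∫ |φ_h(y·f(x)) − φ_h(y·g(x))|² dP(x,y) = ∫ |f(x) − g(x)|² dP_X(x) ≤ 6·max{1, α, 1/τ}·(E_P^{φ_h}(f))^{s/(s+1)}, where s/(s+1) := 1 when s = ∞. -/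
open MeasureTheory ENNReal Set

noncomputable section

namespace ZZS

/-! ## Basic geometry -/

/-- The closed unit cube `[0,1]^m`. -/
def cube (m : ℕ) : Set (Fin m → ℝ) := Set.univ.pi fun _ => Set.Icc (0 : ℝ) 1

/-- The open unit cube `(0,1)^m`. -/
def cubeo (m : ℕ) : Set (Fin m → ℝ) := Set.univ.pi fun _ => Set.Ioo (0 : ℝ) 1

/-- The label set `{-1, 1} ⊆ ℝ`. -/
def labels : Set ℝ := {-1, 1}

/-- Euclidean distance on `Fin m → ℝ`. -/
def e2 {m : ℕ} (x z : Fin m → ℝ) : ℝ := Real.sqrt (∑ i, (x i - z i) ^ 2)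

/-! ## Multi-index partial derivatives and Hölder balls -/

/-- Iterated partial derivative along a list of coordinate directions. -/
def pderivList {m : ℕ} : List (Fin m) → ((Fin m → ℝ) → ℝ) → (Fin m → ℝ) → ℝ
  | [], f => f
  | i :: l, f => pderivList l fun x => fderiv ℝ f x (Pi.single i 1)

/-- The canonical list of directions attached to a multi-index. -/
def idxList {m : ℕ} (u : Fin m → ℕ) : List (Fin m) :=
  (List.finRange m).flatMap fun i => List.replicate (u i) i

/-- The partial derivative `D^u f` for a multi-index `u`. -/
def Dm {m : ℕ} (u : Fin m → ℕ) (f : (Fin m → ℝ) → ℝ) : (Fin m → ℝ) → ℝ :=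
  pderivList (idxList u) f

/-- The order `‖u‖₁` of a multi-index `u`. -/
def mord {m : ℕ} (u : Fin m → ℕ) : ℕ := ∑ i, u i

/-- The Hölder-`β` norm of `f`, suprema taken over the set `S` (value in `ℝ≥0∞`). -/
def holderNormOn (m : ℕ) (β : ℝ) (S : Set (Fin m → ℝ)) (f : (Fin m → ℝ) → ℝ) : ℝ≥0∞ :=
  (⨆ (u : Fin m → ℕ) (_ : (mord u : ℝ) < β) (x ∈ S), ENNReal.ofReal |Dm u f x|) +
    ⨆ (u : Fin m → ℕ) (_ : (⌈β⌉ : ℝ) - 1 ≤ (mord u : ℝ) ∧ (mord u : ℝ) < β)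
      (x ∈ S) (z ∈ S) (_ : x ≠ z),
      ENNReal.ofReal |Dm u f x - Dm u f z| /
        ENNReal.ofReal (e2 x z) ^ (β + 1 - (⌈β⌉ : ℝ))

/-- `⌈β - 1⌉`, the number of derivatives required for Hölder-`β` smoothness. -/
def smoothOrder (β : ℝ) : ℕ := ⌈β - 1⌉₊

/-- The Hölder ball `B^β_r([0,1]^m)`:  `⌈β-1⌉`-times continuously differentiable functions on
the interior of the cube (with uniformly continuous derivatives, so that they extend
continuously), with Hölder-`β` norm at most `r`. -/
def HolderBall (m : ℕ) (β r : ℝ) : Set ((Fin m → ℝ) → ℝ) :=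
  {f | ContinuousOn f (cube m) ∧
    ContDiffOn ℝ (smoothOrder β : ℕ∞) f (cubeo m) ∧
    (∀ u : Fin m → ℕ, (mord u : ℝ) < β → UniformContinuousOn (Dm u f) (cubeo m)) ∧
    holderNormOn m β (cubeo m) f ≤ ENNReal.ofReal r}

/-! ## Compositional function classes -/

/-- `G^H_m(dstar, β, r)`: Hölder-`β` functions of `dstar` of the `m` coordinates. -/
def GH (m dstar : ℕ) (β r : ℝ) : Set ((Fin m → ℝ) → ℝ) :=
  {f | ∃ (e : Fin dstar → Fin m) (g : (Fin dstar → ℝ) → ℝ),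
    StrictMono e ∧ g ∈ HolderBall dstar β r ∧ ∀ x ∈ cube m, f x = g fun j => x (e j)}

/-- `G^M_m(dmax)`: maxima of at most `dmax` coordinates. -/
def GM (m dmax : ℕ) : Set ((Fin m → ℝ) → ℝ) :=
  {f | ∃ (I : Finset (Fin m)) (hI : I.Nonempty), I.card ≤ dmax ∧
    ∀ x ∈ cube m, f x = I.sup' hI fun i => x i}

/-- The compositional class `G^CHOM_d(q, K, dmax, dstar, β, r)`. -/
def GCHOM (K dmax dstar : ℕ) (β r : ℝ) : ℕ → (d : ℕ) → Set ((Fin d → ℝ) → ℝ)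
  | 0, d => {f | ∃ h ∈ GH d dstar β r ∪ GM d dmax, ∀ x ∈ cube d, f x = h x}
  | q + 1, d =>
    {f | ∃ (H : (Fin d → ℝ) → Fin K → ℝ) (g : (Fin K → ℝ) → ℝ),
      (∀ j, (fun x => H x j) ∈ GH d dstar β r ∪ GM d dmax) ∧
      (∀ x ∈ cube d, H x ∈ cube K) ∧
      g ∈ GCHOM K dmax dstar β r q K ∧ ∀ x ∈ cube d, f x = g (H x)}

/-- The compositional class `G^CH_d(q, K, dstar, β, r)` (no max-value components). -/
def GCH (K dstar : ℕ) (β r : ℝ) : ℕ → (d : ℕ) → Set ((Fin d → ℝ) → ℝ)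
  | 0, d => {f | ∃ h ∈ GH d dstar β r, ∀ x ∈ cube d, f x = h x}
  | q + 1, d =>
    {f | ∃ (H : (Fin d → ℝ) → Fin K → ℝ) (g : (Fin K → ℝ) → ℝ),
      (∀ j, (fun x => H x j) ∈ GH d dstar β r) ∧
      (∀ x ∈ cube d, H x ∈ cube K) ∧
      g ∈ GCH K dstar β r q K ∧ ∀ x ∈ cube d, f x = g (H x)}

/-! ## Losses, risks, and data distributions -/

/-- The sign function (`sgn 0 = 1`). -/
def sgn (t : ℝ) : ℝ := if 0 ≤ t then 1 else -1

/-- The hinge loss. -/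
def hinge (t : ℝ) : ℝ := max 0 (1 - t)

/-- The truncation operator `T_F`. -/
def trunc (F t : ℝ) : ℝ := min F (max (-F) t)

/-- The joint distribution `P_{η,Q}` on `[0,1]^d × {-1,1}` with input marginal `Q` and
conditional class probability function `η`. -/
def jointMeasure {d : ℕ} (η : (Fin d → ℝ) → ℝ) (Q : Measure (Fin d → ℝ)) :
    Measure ((Fin d → ℝ) × ℝ) :=
  Q.bind fun x =>
    ENNReal.ofReal (η x) • Measure.dirac (x, (1 : ℝ)) +
      ENNReal.ofReal (1 - η x) • Measure.dirac (x, (-1 : ℝ))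

/-- The 0-1 risk (misclassification error). -/
def risk01 {d : ℕ} (P : Measure ((Fin d → ℝ) × ℝ)) (f : (Fin d → ℝ) → ℝ) : ℝ :=
  (P {p | sgn (f p.1) ≠ p.2}).toReal

/-- The infimum of the 0-1 risk over all measurable functions. -/
def bayes01 {d : ℕ} (P : Measure ((Fin d → ℝ) × ℝ)) : ℝ :=
  ⨅ g : {g : (Fin d → ℝ) → ℝ // Measurable g}, risk01 P g.1

/-- The excess 0-1 risk. -/
def excess01 {d : ℕ} (P : Measure ((Fin d → ℝ) × ℝ)) (f : (Fin d → ℝ) → ℝ) : ℝ :=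
  risk01 P f - bayes01 P

/-- The `φ`-risk. -/
def riskPhi {d : ℕ} (φ : ℝ → ℝ) (P : Measure ((Fin d → ℝ) × ℝ)) (f : (Fin d → ℝ) → ℝ) : ℝ :=
  ∫ p, φ (p.2 * f p.1) ∂P

/-- The infimum of the `φ`-risk over all measurable functions. -/
def bayesPhi {d : ℕ} (φ : ℝ → ℝ) (P : Measure ((Fin d → ℝ) × ℝ)) : ℝ :=
  ⨅ g : {g : (Fin d → ℝ) → ℝ // Measurable g}, riskPhi φ P g.1

/-- The excess `φ`-risk. -/
def excessPhi {d : ℕ} (φ : ℝ → ℝ) (P : Measure ((Fin d → ℝ) × ℝ)) (f : (Fin d → ℝ) → ℝ) : ℝ :=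
  riskPhi φ P f - bayesPhi φ P

/-- A Borel probability measure on `[0,1]^d × {-1,1}`, presented by its input marginal `Q`
(a Borel probability measure concentrated on the cube) and its conditional class
probability function `η` (measurable, `[0,1]`-valued);  the measure itself is
`jointMeasure η Q`. -/
structure DataDist (d : ℕ) where
  η : (Fin d → ℝ) → ℝ
  Q : Measure (Fin d → ℝ)
  η_meas : Measurable η
  η_mem : ∀ x, η x ∈ Set.Icc (0 : ℝ) 1
  Q_prob : IsProbabilityMeasure Q
  Q_cube : Q (cube d) = 1

/-- The measure on `[0,1]^d × {-1,1}` associated with a `DataDist`. -/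
def DataDist.P {d : ℕ} (D : DataDist d) : Measure ((Fin d → ℝ) × ℝ) := jointMeasure D.η D.Q

/-- `x ^ s` for `s ∈ [0,∞]`, with the conventions `x ^ ∞ = 0` for `x < 1` and `1 ^ ∞ = 1`. -/
def rpowE (x : ℝ≥0∞) (s : ℝ≥0∞) : ℝ≥0∞ :=
  if s = ∞ then (if x < 1 then 0 else if x = 1 then 1 else ∞) else x ^ s.toReal

/-- The Tsybakov noise class `T^{d,s}_{α,τ}` (noise exponent `s ∈ [0,∞]`,
threshold `τ ∈ (0,∞]`). -/
def Tsybakov (d : ℕ) (s : ℝ≥0∞) (α : ℝ) (τ : ℝ≥0∞) : Set (DataDist d) :=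
  {P | ∀ t : ℝ, 0 < t → ENNReal.ofReal t ≤ τ →
    P.Q ({x | |2 * P.η x - 1| ≤ t} ∩ cube d) ≤ ENNReal.ofReal α * rpowE (ENNReal.ofReal t) s}

/-- The class `H^{d,β,r}_{q,K,dstar,dmax}`: distributions whose conditional class probability
agrees a.s. with a member of `G^CHOM`. -/
def HCHOM (d q K dstar dmax : ℕ) (β r : ℝ) : Set (DataDist d) :=
  {P | ∃ f ∈ GCHOM K dmax dstar β r q d, ∀ᵐ x ∂P.Q, P.η x = f x}

/-- `M_{Λ,d}`: Borel probability measures on `[0,1]^d` with a `[0,Λ]`-valued density with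
respect to Lebesgue measure. -/
def MLam (d : ℕ) (Λ : ℝ) : Set (Measure (Fin d → ℝ)) :=
  {Q | ∃ g : (Fin d → ℝ) → ℝ, Measurable g ∧ (∀ x, g x ∈ Set.Icc 0 Λ) ∧
    Q = (volume.restrict (cube d)).withDensity fun x => ENNReal.ofReal (g x)}

/-- The class `H^{d,β,r,Λ}_{q,K,dstar}`: joint laws `P_{η,Q}` with `η ∈ G^CH` (valued in
`[0,1]`) and `Q ∈ M_{Λ,d}`. -/
def HCHL (d q K dstar : ℕ) (β r Λ : ℝ) : Set (DataDist d) :=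
  {P | (∃ f ∈ GCH K dstar β r q d, (∀ x ∈ cube d, f x ∈ Set.Icc (0 : ℝ) 1) ∧
      ∀ᵐ x ∂P.Q, P.η x = f x) ∧ P.Q ∈ MLam d Λ}

/-- The class `H^{d,β,r}_{q,K,dstar}`: joint laws `P_{η,Q}` with `η ∈ G^CH` (valued in
`[0,1]`) and `Q` an arbitrary Borel probability measure on the cube. -/
def HCH (d q K dstar : ℕ) (β r : ℝ) : Set (DataDist d) :=
  {P | ∃ f ∈ GCH K dstar β r q d, (∀ x ∈ cube d, f x ∈ Set.Icc (0 : ℝ) 1) ∧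
    ∀ᵐ x ∂P.Q, P.η x = f x}

/-! ## Samples and estimators -/

/-- The law of an i.i.d. sample of size `n` from `μ`. -/
def iid {α : Type*} [MeasurableSpace α] (μ : Measure α) : (n : ℕ) → Measure (Fin n → α)
  | 0 => Measure.dirac fun i => i.elim0
  | n + 1 => (iid μ n).bind fun p => μ.map fun a => Fin.snoc p a

/-- An estimator: a rule assigning to each sample of size `n` a function `[0,1]^d → ℝ`. -/
def Estimator (d n : ℕ) := (Fin n → (Fin d → ℝ) × ℝ) → (Fin d → ℝ) → ℝ

/-- (Joint) measurability of an estimator. -/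
def Estimator.Meas {d n : ℕ} (A : Estimator d n) : Prop :=
  Measurable fun p : (Fin n → (Fin d → ℝ) × ℝ) × (Fin d → ℝ) => A p.1 p.2

/-- The expected excess 0-1 risk `E_{P^{⊗n}}[E_P(f̂_n)]` of an estimator. -/
def expectedExcess01 {d : ℕ} (P : Measure ((Fin d → ℝ) × ℝ)) {n : ℕ} (A : Estimator d n) : ℝ :=
  ∫ ω, excess01 P (A ω) ∂iid P n

/-- The covering number `N(F, γ)` (uniform norm over `Ω`), valued in `ℝ≥0∞`. -/
def coveringNumber {X : Type*} (Ω : Set X) (F : Set (X → ℝ)) (γ : ℝ) : ℝ≥0∞ :=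
  ⨅ (A : Finset (X → ℝ))
    (_ : ↑A ⊆ F ∧ ∀ f ∈ F, ∃ g ∈ A, ∀ x ∈ Ω, |f x - g x| ≤ γ),
    (A.card : ℝ≥0∞)

/-- `f` is an empirical `φ`-risk minimizer over `F` for the sample `ω`. -/
def IsERM {d n : ℕ} (φ : ℝ → ℝ) (F : Set ((Fin d → ℝ) → ℝ))
    (ω : Fin n → (Fin d → ℝ) × ℝ) (f : (Fin d → ℝ) → ℝ) : Prop :=
  f ∈ F ∧ ∀ g ∈ F,
    (n : ℝ)⁻¹ * ∑ i, φ ((ω i).2 * f ((ω i).1)) ≤ (n : ℝ)⁻¹ * ∑ i, φ ((ω i).2 * g ((ω i).1))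

/-! ## ReLU neural networks -/

/-- A feedforward ReLU network with input dimension `d`. -/
structure ReLUNet (d : ℕ) where
  L : ℕ
  width : ℕ → ℕ
  W : (i : ℕ) → Fin (width (i + 1)) → Fin (width i) → ℝ
  v : (i : ℕ) → Fin (width i) → ℝ
  h0 : width 0 = d
  hL : width (L + 1) = 1

/-- The `i`-th intermediate layer output `W_i σ_{v_i} ⋯ W_1 σ_{v_1} W_0 x`. -/
def ReLUNet.layer {d : ℕ} (net : ReLUNet d) (x : Fin (net.width 0) → ℝ) :
    (i : ℕ) → Fin (net.width (i + 1)) → ℝ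
  | 0 => fun j => ∑ k, net.W 0 j k * x k
  | i + 1 => fun j => ∑ k, net.W (i + 1) j k * max 0 (net.layer x i k - net.v (i + 1) k)

/-- The real-valued function computed by a ReLU network. -/
def ReLUNet.eval {d : ℕ} (net : ReLUNet d) (x : Fin d → ℝ) : ℝ :=
  net.layer (fun j => x (Fin.cast net.h0 j)) net.L (Fin.cast net.hL.symm 0)

/-- The class `F^NN_d(G, N, S, B, Fb)` of ReLU networks with depth `≤ G`, widths `≤ N`,
at most `S` nonzero parameters, parameter magnitudes `≤ B`, and uniform norm on the cube
`≤ Fb`. -/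
def FNN (d : ℕ) (G N : ℝ) (S : ℝ≥0∞) (B : ℝ) (Fb : ℝ≥0∞) : Set ((Fin d → ℝ) → ℝ) :=
  {f | ∃ net : ReLUNet d,
    (∀ x, f x = net.eval x) ∧
    (net.L : ℝ) ≤ G ∧
    (∀ i ≤ net.L + 1, (net.width i : ℝ) ≤ N) ∧
    ((∑ i ∈ Finset.range (net.L + 1),
        (Nat.card {p : Fin (net.width (i + 1)) × Fin (net.width i) // net.W i p.1 p.2 ≠ 0}
          : ℝ≥0∞)) +
      ∑ i ∈ Finset.range net.L,
        (Nat.card {j : Fin (net.width (i + 1)) // net.v (i + 1) j ≠ 0} : ℝ≥0∞)) ≤ S ∧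
    (∀ i ≤ net.L, ∀ j k, |net.W i j k| ≤ B) ∧
    (∀ i, 1 ≤ i → i ≤ net.L → ∀ j, |net.v i j| ≤ B) ∧
    ∀ x ∈ cube d, ENNReal.ofReal |f x| ≤ Fb}

/-! ## Kullback–Leibler divergence -/

open Classical in
/-- The Kullback–Leibler divergence. -/
def KL {X : Type*} [MeasurableSpace X] (P Q : Measure X) : ℝ≥0∞ :=
  if P ≪ Q ∧ Integrable (fun x => Real.log (P.rnDeriv Q x).toReal) P then
    ENNReal.ofReal (∫ x, Real.log (P.rnDeriv Q x).toReal ∂P)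
  else ∞

/-- The exponent `e / (dstar/(s+1) + (1 + 1/(s+1))·e)` of the minimax rate, for noise
exponent `s ∈ [0,∞]` (equal to `1` when `s = ∞`). -/
def rateExp (dstar : ℕ) (e : ℝ) (s : ℝ≥0∞) : ℝ :=
  if s = ∞ then 1
  else e / ((dstar : ℝ) / (s.toReal + 1) + (1 + 1 / (s.toReal + 1)) * e)


/-! ### Auxiliary lemmas for statement 9 -/

lemma continuous_hinge : Continuous hinge :=
  continuous_const.max (continuous_const.sub continuous_id)

lemma hinge_nonneg (t : ℝ) : 0 ≤ hinge t := le_max_left _ _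

lemma measurable_kernel9 {d : ℕ} {η : (Fin d → ℝ) → ℝ} (hη : Measurable η) :
    Measurable (fun x : Fin d → ℝ =>
      (ENNReal.ofReal (η x) • Measure.dirac (x, (1:ℝ)) +
        ENNReal.ofReal (1 - η x) • Measure.dirac (x, (-1:ℝ)))) := by
  apply Measure.measurable_of_measurable_coe
  intro s hs
  simp only [Measure.coe_add, Pi.add_apply, Measure.smul_apply, smul_eq_mul,
    Measure.dirac_apply' _ hs]
  apply Measurable.add
  · exact (hη.ennreal_ofReal).mul
      ((measurable_one.indicator hs).comp (measurable_id.prodMk measurable_const))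
  · exact ((measurable_const.sub hη).ennreal_ofReal).mul
      ((measurable_one.indicator hs).comp (measurable_id.prodMk measurable_const))

lemma lintegral_jointMeasure9 {d : ℕ} {η : (Fin d → ℝ) → ℝ} (hη : Measurable η)
    (Q : Measure (Fin d → ℝ)) {F : (Fin d → ℝ) × ℝ → ℝ≥0∞} (hF : Measurable F) :
    ∫⁻ p, F p ∂(jointMeasure η Q) =
      ∫⁻ x, ENNReal.ofReal (η x) * F (x, 1) + ENNReal.ofReal (1 - η x) * F (x, -1) ∂Q := by
  rw [jointMeasure, Measure.lintegral_bind (measurable_kernel9 hη).aemeasurable hF.aemeasurable]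
  refine lintegral_congr fun x => ?_
  rw [lintegral_add_measure, lintegral_smul_measure, lintegral_smul_measure,
    lintegral_dirac' _ hF, lintegral_dirac' _ hF, smul_eq_mul, smul_eq_mul]

lemma integral_jointMeasure9 {d : ℕ} {η : (Fin d → ℝ) → ℝ} (hη : Measurable η)
    (hη01 : ∀ x, η x ∈ Set.Icc (0:ℝ) 1)
    (Q : Measure (Fin d → ℝ)) {F : (Fin d → ℝ) × ℝ → ℝ} (hF : Measurable F)
    (hF0 : ∀ p, 0 ≤ F p) :
    ∫ p, F p ∂(jointMeasure η Q) =
      ∫ x, η x * F (x, 1) + (1 - η x) * F (x, -1) ∂Q := by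
  have h1 : ∀ x, 0 ≤ η x := fun x => (hη01 x).1
  have h2 : ∀ x, 0 ≤ 1 - η x := fun x => by linarith [(hη01 x).2]
  have hm1 : Measurable fun x => F (x, (1:ℝ)) :=
    hF.comp (measurable_id.prodMk measurable_const)
  have hm2 : Measurable fun x => F (x, (-1:ℝ)) :=
    hF.comp (measurable_id.prodMk measurable_const)
  rw [integral_eq_lintegral_of_nonneg_ae (ae_of_all _ hF0) hF.aestronglyMeasurable,
    integral_eq_lintegral_of_nonneg_ae
      (ae_of_all _ fun x => add_nonneg (mul_nonneg (h1 x) (hF0 _)) (mul_nonneg (h2 x) (hF0 _)))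
      ((hη.mul hm1).add ((measurable_const.sub hη).mul hm2)).aestronglyMeasurable]
  congr 1
  rw [lintegral_jointMeasure9 hη Q hF.ennreal_ofReal]
  refine lintegral_congr fun x => ?_
  rw [ENNReal.ofReal_add (mul_nonneg (h1 x) (hF0 _)) (mul_nonneg (h2 x) (hF0 _)),
    ENNReal.ofReal_mul (h1 x), ENNReal.ofReal_mul (h2 x)]

lemma hinge_inner_ge {e t : ℝ} (he : e ∈ Set.Icc (0:ℝ) 1) :
    1 - |2*e - 1| ≤ e * hinge t + (1 - e) * hinge (-t) := by
  obtain ⟨h0, h1⟩ := he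
  have a1 : 1 - t ≤ hinge t := le_max_right _ _
  have a2 : (0:ℝ) ≤ hinge t := le_max_left _ _
  have a3 : 1 + t ≤ hinge (-t) := by
    have : 1 + t ≤ max 0 (1 - -t) := le_trans (le_of_eq (by ring)) (le_max_right _ _)
    simpa [hinge] using this
  have a4 : (0:ℝ) ≤ hinge (-t) := le_max_left _ _
  rcases abs_cases (2*e - 1) with ⟨he', _⟩ | ⟨he', _⟩ <;> rw [he'] <;> nlinarith

lemma hinge_sgn_value {e : ℝ} (he : e ∈ Set.Icc (0:ℝ) 1) :
    e * hinge (sgn (2*e - 1)) + (1 - e) * hinge (-(sgn (2*e - 1))) = 1 - |2*e - 1| := by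
  obtain ⟨h0, h1⟩ := he
  rcases le_or_gt 0 (2*e - 1) with h | h
  · rw [sgn, if_pos h, abs_of_nonneg h]
    norm_num [hinge]; ring
  · rw [sgn, if_neg (not_le.mpr h), abs_of_neg h]
    norm_num [hinge]; ring

lemma sgn_cases (t : ℝ) : sgn t = 1 ∨ sgn t = -1 := by
  unfold sgn; split_ifs <;> simp

lemma hinge_of_le_one {t : ℝ} (h : t ≤ 1) : hinge t = 1 - t :=
  max_eq_right (by linarith)

lemma hinge_le_of_abs_le {t B : ℝ} (h : |t| ≤ B) : hinge t ≤ 1 + B := by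
  rcases abs_le.mp h with ⟨h1, h2⟩
  exact max_le (by linarith [abs_nonneg t]) (by linarith)

lemma DataDist.isProbP {d : ℕ} (D : DataDist d) : IsProbabilityMeasure D.P := by
  haveI := D.Q_prob
  constructor
  rw [DataDist.P, ← lintegral_one, lintegral_jointMeasure9 D.η_meas D.Q measurable_const]
  have : ∀ x, ENNReal.ofReal (D.η x) * 1 + ENNReal.ofReal (1 - D.η x) * 1 = 1 := by
    intro x
    rw [mul_one, mul_one, ← ENNReal.ofReal_add (D.η_mem x).1 (by linarith [(D.η_mem x).2])]
    norm_num
  rw [lintegral_congr this, lintegral_one, measure_univ]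

set_option maxHeartbeats 1600000 in
/-- Lemma 6.3 : hinge-loss calibration and variance bound. -/
theorem statement_9
    (d : ℕ) (hd : 0 < d) (α τ : ℝ) (hα : 0 < α) (hτ : 0 < τ) (s : ℝ≥0∞)
    (D : DataDist d) (hD : D ∈ Tsybakov d s α (ENNReal.ofReal τ))
    (g : (Fin d → ℝ) → ℝ) (hgm : Measurable g) (hgb : ∃ C : ℝ, ∀ x, |g x| ≤ C)
    (hg : ∀ᵐ x ∂D.Q, g x = sgn (2 * D.η x - 1)) :
    ((⨅ f : {f : (Fin d → ℝ) → ℝ // Measurable f ∧ ∃ C : ℝ, ∀ x, |f x| ≤ C},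
        riskPhi hinge D.P f.1) = riskPhi hinge D.P g) ∧
      ∀ f : (Fin d → ℝ) → ℝ, Measurable f → (∀ x, f x ∈ Set.Icc (-1 : ℝ) 1) →
        ((∫ p, (hinge (p.2 * f p.1) - hinge (p.2 * g p.1)) ^ 2 ∂D.P) =
            ∫ x, (f x - g x) ^ 2 ∂D.Q) ∧
          (∫ x, (f x - g x) ^ 2 ∂D.Q) ≤
            6 * max 1 (max α (1 / τ)) *
              excessPhi hinge D.P f ^
                (if s = ∞ then (1 : ℝ) else s.toReal / (s.toReal + 1)) := by
  classical
  haveI hQp : IsProbabilityMeasure D.Q := D.Q_prob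
  haveI hPp : IsProbabilityMeasure D.P := D.isProbP
  obtain ⟨C, hC⟩ := hgb
  have hC0 : 0 ≤ C := le_trans (abs_nonneg _) (hC (fun _ => 0))
  -- risk formula over Q
  have riskQ : ∀ (h : (Fin d → ℝ) → ℝ), Measurable h →
      riskPhi hinge D.P h = ∫ x, D.η x * hinge (h x) + (1 - D.η x) * hinge (-(h x)) ∂D.Q := by
    intro h hm
    have := integral_jointMeasure9 D.η_meas D.η_mem D.Q
      (F := fun p => hinge (p.2 * h p.1))
      (continuous_hinge.measurable.comp (measurable_snd.mul (hm.comp measurable_fst)))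
      (fun p => hinge_nonneg _)
    simpa [riskPhi, DataDist.P, one_mul, neg_one_mul] using this
  -- integrability of bounded a.e.-measurable functions
  have intb : ∀ (h : (Fin d → ℝ) → ℝ), AEStronglyMeasurable h D.Q → ∀ B : ℝ,
      (∀ᵐ x ∂D.Q, |h x| ≤ B) → Integrable h D.Q := by
    intro h hm B hb
    exact (integrable_const B).mono' hm (hb.mono fun x hx => by simpa [Real.norm_eq_abs] using hx)
  have hmeta : Measurable fun x => |2 * D.η x - 1| :=
    ((D.η_meas.const_mul 2).sub measurable_const).abs
  have habs1 : ∀ x, |2 * D.η x - 1| ≤ 1 := fun x =>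
    abs_le.mpr ⟨by linarith [(D.η_mem x).1], by linarith [(D.η_mem x).2]⟩
  -- value of the risk of g
  have hRg : riskPhi hinge D.P g = ∫ x, (1 - |2 * D.η x - 1|) ∂D.Q := by
    rw [riskQ g hgm]
    refine integral_congr_ae (hg.mono fun x hx => ?_)
    show D.η x * hinge (g x) + (1 - D.η x) * hinge (-g x) = 1 - |2 * D.η x - 1|
    rw [hx]; exact hinge_sgn_value (D.η_mem x)
  have intRg : Integrable (fun x => (1 : ℝ) - |2 * D.η x - 1|) D.Q := by
    refine intb _ (measurable_const.sub hmeta).aestronglyMeasurable 1 (ae_of_all _ fun x => ?_)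
    rw [abs_le]
    constructor <;> [linarith [habs1 x]; linarith [abs_nonneg (2 * D.η x - 1)]]
  have intRf : ∀ (h : (Fin d → ℝ) → ℝ), Measurable h → ∀ B : ℝ, (∀ x, |h x| ≤ B) →
      Integrable (fun x => D.η x * hinge (h x) + (1 - D.η x) * hinge (-(h x))) D.Q := by
    intro h hm B hB
    refine intb _ ((D.η_meas.mul (continuous_hinge.measurable.comp hm)).add
      ((measurable_const.sub D.η_meas).mul
        (continuous_hinge.measurable.comp hm.neg))).aestronglyMeasurable
      (1 + B) (ae_of_all _ fun x => ?_)
    have b1 : hinge (h x) ≤ 1 + B := hinge_le_of_abs_le (hB x)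
    have b2 : hinge (-(h x)) ≤ 1 + B := hinge_le_of_abs_le (by simpa [abs_neg] using hB x)
    have e1 := (D.η_mem x).1
    have e2 := (D.η_mem x).2
    have n1 := hinge_nonneg (h x)
    have n2 := hinge_nonneg (-(h x))
    rw [abs_le]
    constructor <;> nlinarith
  have hBle : 0 ≤ C → True := fun _ => trivial
  have hinf_le : ∀ (h : (Fin d → ℝ) → ℝ), Measurable h → ∀ B : ℝ, (∀ x, |h x| ≤ B) →
      riskPhi hinge D.P g ≤ riskPhi hinge D.P h := by
    intro h hm B hB
    rw [hRg, riskQ h hm]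
    exact integral_mono_ae intRg (intRf h hm B hB)
      (ae_of_all _ fun x => hinge_inner_ge (D.η_mem x))
  constructor
  · haveI : Nonempty {f : (Fin d → ℝ) → ℝ // Measurable f ∧ ∃ C : ℝ, ∀ x, |f x| ≤ C} :=
      ⟨⟨g, hgm, C, hC⟩⟩
    refine le_antisymm (ciInf_le (f := fun f : {f : (Fin d → ℝ) → ℝ // Measurable f ∧ ∃ C : ℝ, ∀ x, |f x| ≤ C} =>
        riskPhi hinge D.P f.1) ⟨0, ?_⟩ ⟨g, hgm, C, hC⟩) (le_ciInf fun f => ?_)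
    · rintro r ⟨h, rfl⟩
      exact integral_nonneg fun p => hinge_nonneg _
    · obtain ⟨hm, B, hB⟩ := f.2
      exact hinf_le f.1 hm B hB
  · intro f hfm hf1
    have hfb : ∀ x, |f x| ≤ 1 := fun x => abs_le.mpr ⟨(hf1 x).1, (hf1 x).2⟩
    have hgae : ∀ᵐ x ∂D.Q, g x = 1 ∨ g x = -1 :=
      hg.mono fun x hx => by rw [hx]; exact sgn_cases _
    have hfg2 : ∀ᵐ x ∂D.Q, |f x - g x| ≤ 2 := by
      refine hgae.mono fun x hx => ?_
      rcases hx with h | h <;> rw [h] <;>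
        exact abs_le.mpr ⟨by linarith [(hf1 x).1], by linarith [(hf1 x).2]⟩
    have e1 : ∀ x, hinge (f x) = 1 - f x := fun x => hinge_of_le_one (hf1 x).2
    have e2 : ∀ x, hinge (-f x) = 1 + f x := fun x => by
      have := hinge_of_le_one (t := -f x) (by linarith [(hf1 x).1])
      rw [this]; ring
    -- integrability
    have int_V : Integrable (fun x => (f x - g x) ^ 2) D.Q := by
      refine intb _ ((hfm.sub hgm).pow_const 2).aestronglyMeasurable ((1 + C) ^ 2)
        (ae_of_all _ fun x => ?_)
      have h1 : |f x - g x| ≤ 1 + C := le_trans (abs_sub _ _) (by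
        have := hfb x; have := hC x; linarith)
      rw [abs_of_nonneg (sq_nonneg _), ← sq_abs]
      exact pow_le_pow_left₀ (abs_nonneg _) h1 2
    have int_E : Integrable (fun x => |2 * D.η x - 1| * |f x - g x|) D.Q := by
      refine intb _ (hmeta.mul (hfm.sub hgm).abs).aestronglyMeasurable (1 + C)
        (ae_of_all _ fun x => ?_)
      have h1 : |f x - g x| ≤ 1 + C := le_trans (abs_sub _ _) (by
        have := hfb x; have := hC x; linarith)
      rw [abs_of_nonneg (mul_nonneg (abs_nonneg _) (abs_nonneg _))]
      nlinarith [habs1 x, abs_nonneg (2 * D.η x - 1), abs_nonneg (f x - g x)]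
    -- (a) the identity
    refine ⟨?_, ?_⟩
    · have hFm : Measurable fun p : (Fin d → ℝ) × ℝ =>
          (hinge (p.2 * f p.1) - hinge (p.2 * g p.1)) ^ 2 :=
        ((continuous_hinge.measurable.comp (measurable_snd.mul (hfm.comp measurable_fst))).sub
          (continuous_hinge.measurable.comp (measurable_snd.mul (hgm.comp measurable_fst)))).pow_const 2
      have hj := integral_jointMeasure9 D.η_meas D.η_mem D.Q hFm (fun p => sq_nonneg _)
      rw [show D.P = jointMeasure D.η D.Q from rfl, hj]
      refine integral_congr_ae (hgae.mono fun x hx => ?_)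
      show D.η x * (hinge (1 * f x) - hinge (1 * g x)) ^ 2 +
          (1 - D.η x) * (hinge (-1 * f x) - hinge (-1 * g x)) ^ 2 = (f x - g x) ^ 2
      rcases hx with h | h <;>
        rw [one_mul, one_mul, neg_one_mul, neg_one_mul, h, e1 x, e2 x] <;>
        norm_num [hinge] <;> ring
    -- (b) the variance bound
    set M := max 1 (max α (1 / τ)) with hM_def
    have hM1 : (1:ℝ) ≤ M := le_max_left _ _
    have hMα : α ≤ M := le_trans (le_max_left _ _) (le_max_right _ _)
    have hMτ : 1 / τ ≤ M := le_trans (le_max_right _ _) (le_max_right _ _)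
    have hM0 : (0:ℝ) < M := lt_of_lt_of_le one_pos hM1
    set V := ∫ x, (f x - g x) ^ 2 ∂D.Q with hV_def
    set E := ∫ x, |2 * D.η x - 1| * |f x - g x| ∂D.Q with hE_def
    have hE0 : 0 ≤ E := integral_nonneg fun x => mul_nonneg (abs_nonneg _) (abs_nonneg _)
    have hV0 : 0 ≤ V := integral_nonneg fun x => sq_nonneg _
    -- E is at most the excess risk
    have hEE' : E ≤ excessPhi hinge D.P f := by
      have hbdd : BddBelow (Set.range fun h : {g0 : (Fin d → ℝ) → ℝ // Measurable g0} =>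
          riskPhi hinge D.P h.1) := by
        refine ⟨0, ?_⟩
        rintro r ⟨h, rfl⟩
        exact integral_nonneg fun p => hinge_nonneg _
      have hbayes : bayesPhi hinge D.P ≤ riskPhi hinge D.P g := by
        rw [bayesPhi]
        exact ciInf_le hbdd (⟨g, hgm⟩ : {g0 : (Fin d → ℝ) → ℝ // Measurable g0})
      have hdiff : riskPhi hinge D.P f - riskPhi hinge D.P g = E := by
        rw [riskQ f hfm, hRg, ← integral_sub (intRf f hfm 1 hfb) intRg]
        refine integral_congr_ae (hg.mono fun x hx => ?_)
        show D.η x * hinge (f x) + (1 - D.η x) * hinge (-f x) - (1 - |2 * D.η x - 1|) =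
          |2 * D.η x - 1| * |f x - g x|
        rw [e1 x, e2 x, hx]
        rcases le_or_gt 0 (2 * D.η x - 1) with h | h
        · rw [sgn, if_pos h, abs_of_nonneg h,
            abs_of_nonpos (by linarith [(hf1 x).2] : f x - 1 ≤ 0)]
          ring
        · rw [sgn, if_neg (not_le.mpr h), abs_of_neg h,
            abs_of_nonneg (by linarith [(hf1 x).1] : (0:ℝ) ≤ f x - -1)]
          ring
      rw [excessPhi]; linarith
    have hE'0 : 0 ≤ excessPhi hinge D.P f := le_trans hE0 hEE'
    -- V ≤ 4
    have hV4 : V ≤ 4 := by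
      have h := integral_mono_ae int_V (integrable_const (4:ℝ))
        (hfg2.mono fun x hx => by
          show (f x - g x) ^ 2 ≤ 4
          nlinarith [sq_abs (f x - g x), abs_nonneg (f x - g x)])
      simpa using h
    -- the key inequality
    have hK : ∀ t : ℝ, 0 < t → t ≤ τ →
        V ≤ 4 * (D.Q ({x | |2 * D.η x - 1| ≤ t} ∩ cube d)).toReal + 2 / t * E := by
      intro t ht htτ
      set St := {x | |2 * D.η x - 1| ≤ t} with hSt_def
      have hSt : MeasurableSet St := measurableSet_le hmeta measurable_const
      have intInd : Integrable (St.indicator fun _ => (4:ℝ)) D.Q :=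
        (integrable_const (4:ℝ)).indicator hSt
      have step1 : V ≤ ∫ x,
          (St.indicator (fun _ => (4:ℝ)) x + 2 / t * (|2 * D.η x - 1| * |f x - g x|)) ∂D.Q := by
        refine integral_mono_ae int_V (intInd.add (int_E.const_mul _))
          (hfg2.mono fun x hx => ?_)
        show (f x - g x) ^ 2 ≤
          St.indicator (fun _ => (4:ℝ)) x + 2 / t * (|2 * D.η x - 1| * |f x - g x|)
        by_cases hmem : x ∈ St
        · rw [Set.indicator_of_mem hmem]
          have h4 : (f x - g x) ^ 2 ≤ 4 := by
            nlinarith [sq_abs (f x - g x), abs_nonneg (f x - g x)]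
          have hp : 0 ≤ 2 / t * (|2 * D.η x - 1| * |f x - g x|) := by positivity
          linarith
        · rw [Set.indicator_of_notMem hmem, zero_add]
          have hlt : t < |2 * D.η x - 1| := lt_of_not_ge hmem
          rw [div_mul_eq_mul_div, le_div_iff₀ ht]
          have key : t * |f x - g x| ≤ 2 * |2 * D.η x - 1| := by nlinarith
          nlinarith [mul_le_mul_of_nonneg_right key (abs_nonneg (f x - g x)),
            sq_abs (f x - g x), abs_nonneg (f x - g x)]
      have step2 : ∫ x,
          (St.indicator (fun _ => (4:ℝ)) x + 2 / t * (|2 * D.η x - 1| * |f x - g x|)) ∂D.Q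
          = 4 * (D.Q St).toReal + 2 / t * E := by
        rw [integral_add intInd (int_E.const_mul _), integral_indicator_const _ hSt,
          integral_const_mul, smul_eq_mul]
        rw [hE_def, measureReal_def]; ring
      have step3 : (D.Q St).toReal ≤ (D.Q (St ∩ cube d)).toReal := by
        have hcube : MeasurableSet (cube d) :=
          MeasurableSet.univ_pi fun _ => measurableSet_Icc
        have hc : D.Q (cube d)ᶜ = 0 := by
          rw [measure_compl hcube (measure_ne_top _ _), D.Q_cube, measure_univ, tsub_self]
        have h0 : D.Q (St \ cube d) = 0 :=
          measure_mono_null (fun x hx => hx.2) hc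
        have hle : D.Q St ≤ D.Q (St ∩ cube d) := by
          calc D.Q St ≤ D.Q (St ∩ cube d) + D.Q (St \ cube d) :=
                measure_le_inter_add_diff _ _ _
            _ = D.Q (St ∩ cube d) := by rw [h0, add_zero]
        exact ENNReal.toReal_mono (measure_ne_top _ _) hle
      calc V ≤ 4 * (D.Q St).toReal + 2 / t * E := by rw [← step2]; exact step1
        _ ≤ 4 * (D.Q (St ∩ cube d)).toReal + 2 / t * E := by linarith
    -- Tsybakov translations
    have hD' : ∀ t : ℝ, 0 < t → ENNReal.ofReal t ≤ ENNReal.ofReal τ →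
        D.Q ({x | |2 * D.η x - 1| ≤ t} ∩ cube d) ≤
          ENNReal.ofReal α * rpowE (ENNReal.ofReal t) s := hD
    have hK' : s ≠ ∞ → ∀ t : ℝ, 0 < t → t ≤ τ →
        V ≤ 4 * (α * t ^ s.toReal) + 2 / t * E := by
      intro hs t ht htτ
      have h := hD' t ht (ENNReal.ofReal_le_ofReal htτ)
      rw [rpowE, if_neg hs, ENNReal.ofReal_rpow_of_pos ht,
        ← ENNReal.ofReal_mul hα.le] at h
      have h2 : (D.Q ({x | |2 * D.η x - 1| ≤ t} ∩ cube d)).toReal ≤ α * t ^ s.toReal := by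
        calc (D.Q ({x | |2 * D.η x - 1| ≤ t} ∩ cube d)).toReal
            ≤ (ENNReal.ofReal (α * t ^ s.toReal)).toReal :=
              ENNReal.toReal_mono ENNReal.ofReal_ne_top h
          _ = α * t ^ s.toReal := ENNReal.toReal_ofReal (by positivity)
      calc V ≤ 4 * (D.Q ({x | |2 * D.η x - 1| ≤ t} ∩ cube d)).toReal + 2 / t * E :=
            hK t ht htτ
        _ ≤ 4 * (α * t ^ s.toReal) + 2 / t * E := by linarith
    have hKinf : s = ∞ → ∀ t : ℝ, 0 < t → t ≤ τ → t < 1 → V ≤ 2 / t * E := by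
      intro hs t ht htτ ht1
      have h := hD' t ht (ENNReal.ofReal_le_ofReal htτ)
      rw [hs, rpowE, if_pos rfl, if_pos (ENNReal.ofReal_lt_one.mpr ht1), mul_zero] at h
      have h0 : D.Q ({x | |2 * D.η x - 1| ≤ t} ∩ cube d) = 0 := le_antisymm h (by positivity)
      have hh := hK t ht htτ
      rw [h0] at hh
      simpa using hh
    -- finish
    by_cases hs : s = ∞
    · rw [if_pos hs, Real.rpow_one]
      rcases le_total τ (1/2) with hcase | hcase
      · have h := hKinf hs τ hτ le_rfl (by linarith)
        have h2τ : 2 / τ ≤ 2 * M := by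
          rw [div_eq_mul_one_div]; linarith
        calc V ≤ 2 / τ * E := h
          _ ≤ 2 * M * E := mul_le_mul_of_nonneg_right h2τ hE0
          _ ≤ 2 * M * excessPhi hinge D.P f := by
              apply mul_le_mul_of_nonneg_left hEE'; positivity
          _ ≤ 6 * M * excessPhi hinge D.P f := by nlinarith [mul_nonneg hM0.le hE'0]
      · have h := hKinf hs (1/2) (by norm_num) hcase (by norm_num)
        norm_num at h
        calc V ≤ 4 * E := h
          _ ≤ 4 * excessPhi hinge D.P f := by linarith
          _ ≤ 6 * M * excessPhi hinge D.P f := by nlinarith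
    · rw [if_neg hs]
      set σ := s.toReal with hσ_def
      have hσ0 : 0 ≤ σ := ENNReal.toReal_nonneg
      have hσ1 : (0:ℝ) < σ + 1 := by linarith
      set θ := σ / (σ + 1) with hθ_def
      have hθ0 : 0 ≤ θ := div_nonneg hσ0 hσ1.le
      have hEθ'0 : 0 ≤ excessPhi hinge D.P f ^ θ := Real.rpow_nonneg hE'0 _
      rcases eq_or_lt_of_le hE0 with hE | hE
      · rcases eq_or_lt_of_le hσ0 with hσz | hσz
        · have hθz : θ = 0 := by rw [hθ_def, ← hσz]; norm_num
          rw [hθz, Real.rpow_zero, mul_one]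
          linarith
        · have hVle : V ≤ 0 := by
            refine le_of_forall_pos_le_add fun ε hε => ?_
            set c := (ε / (4 * α)) ^ (1/σ) with hc_def
            have hc0 : 0 < c := Real.rpow_pos_of_pos (by positivity) _
            set t := min τ c with ht_def
            have ht0 : 0 < t := lt_min hτ hc0
            have h := hK' hs t ht0 (min_le_left _ _)
            rw [← hE, mul_zero] at h
            have htc : t ^ σ ≤ ε / (4 * α) := by
              calc t ^ σ ≤ c ^ σ := Real.rpow_le_rpow ht0.le (min_le_right _ _) hσ0
                _ = ε / (4 * α) := by
                    rw [hc_def, ← Real.rpow_mul (by positivity), one_div,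
                      inv_mul_cancel₀ (ne_of_gt hσz), Real.rpow_one]
            have hfin : 4 * (α * t ^ σ) ≤ ε := by
              have h5 := mul_le_mul_of_nonneg_left htc hα.le
              calc 4 * (α * t ^ σ) ≤ 4 * (α * (ε / (4 * α))) := by nlinarith
                _ = ε := by field_simp
            linarith
          have hpos : (0:ℝ) ≤ 6 * M * excessPhi hinge D.P f ^ θ := by positivity
          linarith
      · have hEθ0 : 0 ≤ E ^ θ := Real.rpow_nonneg hE0 _
        have hmono : E ^ θ ≤ excessPhi hinge D.P f ^ θ :=
          Real.rpow_le_rpow hE0 hEE' hθ0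
        rcases le_or_gt E 1 with hE1 | hE1
        · suffices hVE : V ≤ 6 * M * E ^ θ by
            calc V ≤ 6 * M * E ^ θ := hVE
              _ ≤ 6 * M * excessPhi hinge D.P f ^ θ := by
                  apply mul_le_mul_of_nonneg_left hmono; positivity
          set u := E ^ (1/(σ+1)) with hu_def
          have hu0 : 0 < u := Real.rpow_pos_of_pos hE _
          have hu1 : u ≤ 1 := Real.rpow_le_one hE0 hE1 (by positivity)
          have huσ : u ^ σ = E ^ θ := by
            rw [hu_def, ← Real.rpow_mul hE0]
            congr 1
            rw [hθ_def]; field_simp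
          have hsum : θ + 1/(σ+1) = 1 := by rw [hθ_def]; field_simp
          have huE : E ^ θ * u = E := by
            rw [hu_def, ← Real.rpow_add hE, hsum, Real.rpow_one]
          rcases le_total u τ with hcase | hcase
          · have h := hK' hs u hu0 hcase
            have hEu2 : E / u = E ^ θ := by
              rw [eq_comm, eq_div_iff (ne_of_gt hu0)]; exact huE
            have hEu : 2 / u * E = 2 * E ^ θ := by rw [← hEu2]; ring
            calc V ≤ 4 * (α * u ^ σ) + 2 / u * E := h
              _ = 4 * α * E ^ θ + 2 * E ^ θ := by rw [huσ, hEu]; ring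
              _ ≤ 6 * M * E ^ θ := by nlinarith
          · have h := hK' hs τ hτ le_rfl
            have hτσ : τ ^ σ ≤ E ^ θ := by
              rw [← huσ]; exact Real.rpow_le_rpow hτ.le hcase hσ0
            have hEle : E ≤ E ^ θ := by nlinarith
            have h2 : 2 / τ * E ≤ 2 * (1/τ) * E ^ θ := by
              have h2τ : (0:ℝ) ≤ 2 / τ := by positivity
              calc 2 / τ * E ≤ 2 / τ * E ^ θ := mul_le_mul_of_nonneg_left hEle h2τ
                _ = 2 * (1/τ) * E ^ θ := by ring
            calc V ≤ 4 * (α * τ ^ σ) + 2 / τ * E := h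
              _ ≤ 4 * α * E ^ θ + 2 * (1/τ) * E ^ θ := by nlinarith
              _ ≤ 6 * M * E ^ θ := by nlinarith
        · have hE'1 : 1 ≤ excessPhi hinge D.P f := le_trans hE1.le hEE'
          have h1 : (1:ℝ) ≤ excessPhi hinge D.P f ^ θ := by
            calc (1:ℝ) = 1 ^ θ := (Real.one_rpow θ).symm
              _ ≤ excessPhi hinge D.P f ^ θ := Real.rpow_le_rpow zero_le_one hE'1 hθ0
          nlinarith

end ZZS
end
end

section
/- Let d ∈ ℕ, β ∈ (0,∞), ρ ∈ (0,1/2), Q ∈ ℕ, and let G_{Q,d} := {(k_1/(2Q),…,k_d/(2Q)) : k_1,…,k_d odd integers} ∩ [0,1]^d. Let u : ℝ^d → ℝ be ⌈β−1⌉-times continuously differentiable with u(z) = 0 whenever ‖z‖_∞ ≥ ρ, let T : G_{Q,d} → [−1,1], and define f : ℝ^d → ℝ by f(x) := Σ_{a∈G_{Q,d}} Q^{−β}·T(a)·u(Q·(x−a)). Then f is ⌈β−1⌉-times continuously differentiable on ℝ^d and ‖f‖_{H^β(ℝ^d)} ≤ 3·‖u‖_{H^β(ℝ^d)}. -/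
open MeasureTheory ENNReal Set

noncomputable section

namespace ZZS

/-! ### Auxiliary lemmas for Statement 12 -/

private lemma length_idxList' {m : ℕ} (v : Fin m → ℕ) : (idxList v).length = mord v := by
  simp only [idxList, mord, Fin.sum_univ_def, List.length_flatMap]
  congr 1
  apply List.map_congr_left
  intro i _
  simp

private lemma pderivList_zero_on {d : ℕ} (l : List (Fin d)) :
    ∀ (g : (Fin d → ℝ) → ℝ) (s : Set (Fin d → ℝ)), IsOpen s → (∀ y ∈ s, g y = 0) →
      ∀ y ∈ s, pderivList l g y = 0 := by
  induction l with
  | nil => intro g s _ hg y hy; exact hg y hy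
  | cons i l ih =>
    intro g s hs hg y hy
    rw [pderivList]
    refine ih _ s hs (fun z hz => ?_) y hy
    have h0 : g =ᶠ[nhds z] fun _ => (0:ℝ) :=
      Filter.eventually_of_mem (hs.mem_nhds hz) hg
    rw [h0.fderiv_eq]
    simp

private lemma pderivList_sum_affine {d : ℕ} {ι : Type*} [Fintype ι] :
    ∀ (l : List (Fin d)) (g : (Fin d → ℝ) → ℝ), ContDiff ℝ (l.length : ℕ∞) g →
      ∀ (coef : ι → ℝ) (c : ℝ) (b : ι → Fin d → ℝ),
      pderivList l (fun x => ∑ k, coef k * g (c • x + b k)) =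
        fun x => ∑ k, coef k * c ^ l.length * pderivList l g (c • x + b k) := by
  intro l
  induction l with
  | nil => intro g _ coef c b; simp [pderivList]
  | cons i l ih =>
    intro g hg coef c b
    have hg1 : ContDiff ℝ 1 g := by
      refine hg.of_le ?_
      exact_mod_cast Nat.one_le_iff_ne_zero.mpr (Nat.succ_ne_zero _)
    have hder : (fun x => fderiv ℝ (fun x => ∑ k, coef k * g (c • x + b k)) x (Pi.single i 1))
        = fun x => ∑ k, (coef k * c) * (fun y => fderiv ℝ g y (Pi.single i 1)) (c • x + b k) := by
      funext x
      have hA : ∀ k : ι, HasFDerivAt (fun x : Fin d → ℝ => c • x + b k)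
          (c • ContinuousLinearMap.id ℝ (Fin d → ℝ)) x :=
        fun k => ((hasFDerivAt_id x).const_smul c).add_const (b k)
      have hterm : ∀ k : ι, HasFDerivAt (fun x => coef k * g (c • x + b k))
          (coef k • ((fderiv ℝ g (c • x + b k)).comp
            (c • ContinuousLinearMap.id ℝ (Fin d → ℝ)))) x := by
        intro k
        exact ((((hg1.differentiable one_ne_zero) (c • x + b k)).hasFDerivAt.comp x (hA k))).const_mul
          (coef k)
      have hsum := HasFDerivAt.fun_sum (fun k (_ : k ∈ Finset.univ) => hterm k)
      rw [hsum.fderiv]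
      simp only [ContinuousLinearMap.coe_sum', Finset.sum_apply,
        ContinuousLinearMap.coe_smul', Pi.smul_apply, ContinuousLinearMap.coe_comp',
        Function.comp_apply, ContinuousLinearMap.id_apply, _root_.map_smul, smul_eq_mul]
      exact Finset.sum_congr rfl (fun k _ => by ring)
    have hg' : ContDiff ℝ (l.length : ℕ∞) (fun y => fderiv ℝ g y (Pi.single i 1)) := by
      have h1 : ((l.length : ℕ) + 1 : ℕ∞) ≤ ((i :: l).length : ℕ) := by
        simp [List.length_cons]
      exact (hg.fderiv_right (m := (l.length : ℕ∞)) (by exact_mod_cast h1)).clm_apply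
        contDiff_const
    rw [pderivList, hder, ih _ hg' (fun k => coef k * c) c b]
    funext x
    rw [pderivList]
    exact Finset.sum_congr rfl (fun k _ => by rw [List.length_cons]; ring)

/-- Lemma 6.6 : Hölder norm of a sum of disjointly supported bumps. -/
theorem statement_12
    (d Q : ℕ) (hd : 0 < d) (hQ : 0 < Q) (β ρ : ℝ) (hβ : 0 < β)
    (hρ : ρ ∈ Set.Ioo (0 : ℝ) (1 / 2))
    (u : (Fin d → ℝ) → ℝ) (hu : ContDiff ℝ (smoothOrder β : ℕ∞) u)
    (hu0 : ∀ z : Fin d → ℝ, ρ ≤ ‖z‖ → u z = 0)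
    (T : (Fin d → Fin Q) → ℝ) (hT : ∀ k, T k ∈ Set.Icc (-1 : ℝ) 1)
    (f : (Fin d → ℝ) → ℝ)
    (hf : ∀ x, f x = ∑ k : Fin d → Fin Q,
      (Q : ℝ) ^ (-β) * T k *
        u fun i => (Q : ℝ) * (x i - (2 * (k i : ℝ) + 1) / (2 * Q))) :
    ContDiff ℝ (smoothOrder β : ℕ∞) f ∧
      holderNormOn d β Set.univ f ≤ 3 * holderNormOn d β Set.univ u := by
  classical
  obtain ⟨hρ0, hρh⟩ := hρ
  have hρh' : ρ < 2⁻¹ := by rw [show (2⁻¹:ℝ) = 1/2 by norm_num]; exact hρh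
  have hQR : (0:ℝ) < Q := Nat.cast_pos.mpr hQ
  have hQ1 : (1:ℝ) ≤ Q := Nat.one_le_cast.mpr hQ
  -- bump translations
  set b : (Fin d → Fin Q) → Fin d → ℝ := fun k i => -((Q:ℝ) * ((2 * (k i : ℝ) + 1) / (2 * Q)))
    with hb
  set y : (Fin d → Fin Q) → (Fin d → ℝ) → Fin d → ℝ := fun k x => (Q:ℝ) • x + b k with hyd
  have hyi : ∀ k x i, y k x i = (Q:ℝ) * x i + b k i := fun k x i => rfl
  have hfs : f = fun x => ∑ k : Fin d → Fin Q, ((Q:ℝ) ^ (-β) * T k) * u ((Q:ℝ) • x + b k) := by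
    funext x
    rw [hf x]
    refine Finset.sum_congr rfl fun k _ => ?_
    rw [mul_assoc, mul_assoc]
    congr 2
    congr 1
    funext i
    simp only [hb, Pi.add_apply, Pi.smul_apply, smul_eq_mul]
    ring
  have hcf : ContDiff ℝ (smoothOrder β : ℕ∞) f := by
    rw [hfs]
    refine ContDiff.sum fun k _ => contDiff_const.mul (hu.comp ?_)
    exact (contDiff_id.const_smul ((Q:ℝ))).add contDiff_const
  have hvan : ∀ (v : Fin d → ℕ) (w : Fin d → ℝ), ρ < ‖w‖ → Dm v u w = 0 := by
    intro v w hw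
    exact pderivList_zero_on _ u {w | ρ < ‖w‖}
      (isOpen_lt continuous_const continuous_norm)
      (fun z hz => hu0 z (le_of_lt hz)) w hw
  have hord : ∀ v : Fin d → ℕ, (mord v : ℝ) < β → mord v ≤ smoothOrder β := by
    intro v hv
    rcases Nat.eq_zero_or_pos (mord v) with h | h
    · simp [h]
    · have h2 : (mord v - 1 : ℕ) < ⌈β - 1⌉₊ := by
        refine Nat.lt_ceil.mpr ?_
        rw [Nat.cast_sub h, Nat.cast_one]
        linarith
      simp only [smoothOrder]
      omega
  have hmle : ∀ v : Fin d → ℕ, (mord v : ℝ) < β → (mord v : ℝ) + 1 ≤ (⌈β⌉ : ℝ) := by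
    intro v hv
    have h1 : (mord v : ℤ) < ⌈β⌉ := Int.lt_ceil.mpr (by exact_mod_cast hv)
    have h2 : (mord v : ℤ) + 1 ≤ ⌈β⌉ := h1
    exact_mod_cast h2
  have hD : ∀ v : Fin d → ℕ, mord v ≤ smoothOrder β → Dm v f = fun x =>
      ∑ k, ((Q:ℝ) ^ (-β) * T k) * (Q:ℝ) ^ (mord v) * Dm v u (y k x) := by
    intro v hvn
    have hcd : ContDiff ℝ ((idxList v).length : ℕ∞) u := by
      rw [length_idxList']
      exact hu.of_le (by exact_mod_cast hvn)
    have h2 := pderivList_sum_affine (idxList v) u hcd (fun k => (Q:ℝ)^(-β) * T k) (Q:ℝ) b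
    show pderivList (idxList v) f = _
    rw [hfs, h2]
    funext x
    rw [length_idxList']
    rfl
  have hsep : ∀ k k' : Fin d → Fin Q, k ≠ k' → ∀ x : Fin d → ℝ, ‖y k x‖ < 2⁻¹ →
      (2⁻¹ : ℝ) ≤ ‖y k' x‖ := by
    intro k k' hkk x hx
    obtain ⟨i, hi⟩ := Function.ne_iff.mp hkk
    have hne : ((k' i : ℕ) : ℤ) ≠ ((k i : ℕ) : ℤ) := by
      intro h
      exact hi (Fin.ext (by exact_mod_cast h)).symm
    have h1 : (1:ℝ) ≤ |(k' i : ℝ) - (k i : ℝ)| := by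
      exact_mod_cast Int.one_le_abs (sub_ne_zero.mpr hne)
    have hdiff : y k x i - y k' x i = (k' i : ℝ) - (k i : ℝ) := by
      rw [hyi, hyi]
      simp only [hb]
      field_simp
      ring
    have h2 : |y k x i| ≤ ‖y k x‖ := by
      simpa using norm_le_pi_norm (y k x) i
    have h3 : |y k' x i| ≤ ‖y k' x‖ := by
      simpa using norm_le_pi_norm (y k' x) i
    have h4 : |y k x i - y k' x i| ≤ |y k x i| + |y k' x i| := abs_sub _ _
    rw [hdiff] at h4
    linarith
  have hsingle : ∀ v : Fin d → ℕ, mord v ≤ smoothOrder β → ∀ (k) (x), ‖y k x‖ < 2⁻¹ →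
      Dm v f x = ((Q:ℝ) ^ (-β) * T k) * (Q:ℝ) ^ (mord v) * Dm v u (y k x) := by
    intro v hvn k x hk
    have hDv := congrFun (hD v hvn) x
    rw [hDv]
    refine Finset.sum_eq_single_of_mem k (Finset.mem_univ k) fun k' _ hk' => ?_
    have h2 : (2⁻¹:ℝ) ≤ ‖y k' x‖ := hsep k k' (fun h => hk' h.symm) x hk
    rw [hvan v (y k' x) (lt_of_lt_of_le hρh' h2)]
    ring
  have hzero : ∀ v : Fin d → ℕ, mord v ≤ smoothOrder β → ∀ x, (∀ k, ρ < ‖y k x‖) →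
      Dm v f x = 0 := by
    intro v hvn x hx
    have hDv := congrFun (hD v hvn) x
    rw [hDv]
    exact Finset.sum_eq_zero fun k _ => by rw [hvan v (y k x) (hx k)]; ring
  have hdich : ∀ x : Fin d → ℝ, (∀ k, ρ < ‖y k x‖) ∨ ∃ k, ‖y k x‖ ≤ ρ := by
    intro x
    by_cases h : ∃ k, ‖y k x‖ ≤ ρ
    · exact Or.inr h
    · push_neg at h
      exact Or.inl h
  have he2nn : ∀ x z : Fin d → ℝ, 0 ≤ e2 x z := fun x z => Real.sqrt_nonneg _
  have he2pos : ∀ x z : Fin d → ℝ, x ≠ z → 0 < e2 x z := by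
    intro x z hxz
    obtain ⟨i, hi⟩ := Function.ne_iff.mp hxz
    refine Real.sqrt_pos.mpr ?_
    refine Finset.sum_pos' (fun j _ => sq_nonneg _) ⟨i, Finset.mem_univ i, ?_⟩
    have h2 : x i - z i ≠ 0 := sub_ne_zero.mpr hi
    positivity
  have he2sym : ∀ x z : Fin d → ℝ, e2 x z = e2 z x := by
    intro x z
    simp only [e2]
    congr 1
    exact Finset.sum_congr rfl fun i _ => by ring
  have he2scale : ∀ (k) (x z : Fin d → ℝ), e2 (y k x) (y k z) = (Q:ℝ) * e2 x z := by
    intro k x z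
    simp only [e2]
    rw [← Real.sqrt_sq hQR.le, ← Real.sqrt_mul (sq_nonneg _)]
    congr 1
    rw [Finset.mul_sum]
    refine Finset.sum_congr rfl fun i _ => ?_
    rw [hyi, hyi]
    ring
  have hyne : ∀ (k) {x z : Fin d → ℝ}, x ≠ z → y k x ≠ y k z := by
    intro k x z hxz h
    have h1 := he2pos x z hxz
    have h2 := he2scale k x z
    rw [h] at h2
    have h3 : e2 (y k z) (y k z) = 0 := by simp [e2]
    rw [h3] at h2
    nlinarith
  refine ⟨hcf, ?_⟩
  unfold holderNormOn
  set γ : ℝ := β + 1 - (⌈β⌉ : ℝ) with hγd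
  have hγpos : 0 < γ := by
    have := Int.ceil_lt_add_one β
    rw [hγd]
    linarith
  set AU := ⨆ (v : Fin d → ℕ) (_ : (mord v : ℝ) < β) (x ∈ Set.univ),
    ENNReal.ofReal |Dm v u x| with hAU
  set BU := ⨆ (v : Fin d → ℕ) (_ : (⌈β⌉ : ℝ) - 1 ≤ (mord v : ℝ) ∧ (mord v : ℝ) < β)
      (x ∈ Set.univ) (z ∈ Set.univ) (_ : x ≠ z),
      ENNReal.ofReal |Dm v u x - Dm v u z| / ENNReal.ofReal (e2 x z) ^ γ with hBU
  have hAUle : ∀ (v : Fin d → ℕ), (mord v : ℝ) < β → ∀ a : Fin d → ℝ,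
      ENNReal.ofReal |Dm v u a| ≤ AU := by
    intro v hv a
    rw [hAU]
    exact le_iSup_of_le v (le_iSup_of_le hv (le_iSup_of_le a
      (le_iSup_of_le (Set.mem_univ a) le_rfl)))
  have hden : ∀ a b' : Fin d → ℝ, a ≠ b' → ENNReal.ofReal (e2 a b') ^ γ ≠ 0 ∧
      ENNReal.ofReal (e2 a b') ^ γ ≠ ⊤ := by
    intro a b' hab
    have h1 : (0:ℝ≥0∞) < ENNReal.ofReal (e2 a b') := ENNReal.ofReal_pos.mpr (he2pos a b' hab)
    exact ⟨(ENNReal.rpow_pos h1 ENNReal.ofReal_ne_top).ne',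
      ENNReal.rpow_ne_top_of_nonneg hγpos.le ENNReal.ofReal_ne_top⟩
  have hBUnum : ∀ (v : Fin d → ℕ), ((⌈β⌉ : ℝ) - 1 ≤ (mord v : ℝ) ∧ (mord v : ℝ) < β) →
      ∀ a b' : Fin d → ℝ, a ≠ b' →
      ENNReal.ofReal |Dm v u a - Dm v u b'| ≤ BU * ENNReal.ofReal (e2 a b') ^ γ := by
    intro v hv a b' hab
    refine (ENNReal.div_le_iff (hden a b' hab).1 (hden a b' hab).2).mp ?_
    rw [hBU]
    exact le_iSup_of_le v (le_iSup_of_le hv (le_iSup_of_le a (le_iSup_of_le (Set.mem_univ a)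
      (le_iSup_of_le b' (le_iSup_of_le (Set.mem_univ b') (le_iSup_of_le hab le_rfl))))))
  have hfin : AU + 2 * BU ≤ 3 * (AU + BU) := by
    rw [mul_add]
    refine add_le_add ?_ (mul_le_mul_left (by norm_num) _)
    calc AU = 1 * AU := (one_mul _).symm
    _ ≤ 3 * AU := mul_le_mul_left (by norm_num) _
  refine le_trans (add_le_add ?_ ?_) hfin
  · -- sup part
    refine iSup_le fun v => iSup_le fun hv => iSup_le fun x => iSup_le fun _ => ?_
    have hvn := hord v hv
    rcases hdich x with h | ⟨k, hk⟩
    · rw [hzero v hvn x h]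
      simp
    · rw [hsingle v hvn k x (lt_of_le_of_lt hk hρh')]
      have hreal : |((Q:ℝ)^(-β) * T k) * (Q:ℝ)^(mord v) * Dm v u (y k x)|
          ≤ |Dm v u (y k x)| := by
        have hT1 := hT k
        have hr1 : (Q:ℝ)^(-β) * (Q:ℝ)^(mord v) ≤ 1 := by
          rw [← Real.rpow_natCast (Q:ℝ) (mord v), ← Real.rpow_add hQR]
          exact Real.rpow_le_one_of_one_le_of_nonpos hQ1 (by linarith)
        have h0 : (0:ℝ) < (Q:ℝ)^(-β) := Real.rpow_pos_of_pos hQR _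
        have h2 : (0:ℝ) ≤ (Q:ℝ)^(mord v) := pow_nonneg hQR.le _
        have habs : |T k| ≤ 1 := abs_le.mpr ⟨hT1.1, hT1.2⟩
        rw [abs_mul, abs_mul, abs_mul, abs_of_pos h0, abs_of_nonneg h2]
        have h3 : (Q:ℝ)^(-β) * |T k| * (Q:ℝ)^(mord v) ≤ 1 := by
          nlinarith [abs_nonneg (T k)]
        nlinarith [abs_nonneg (Dm v u (y k x))]
      exact le_trans (ENNReal.ofReal_le_ofReal hreal) (hAUle v hv (y k x))
  · -- Hölder part
    refine iSup_le fun v => iSup_le fun hv => iSup_le fun x => iSup_le fun _ =>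
      iSup_le fun z => iSup_le fun _ => iSup_le fun hxz => ?_
    obtain ⟨hv1, hv2⟩ := hv
    have hvn := hord v hv2
    set r : ℝ := (Q:ℝ)^(-β) * (Q:ℝ)^(mord v) with hr
    have hr0 : 0 ≤ r := mul_nonneg (Real.rpow_pos_of_pos hQR _).le (pow_nonneg hQR.le _)
    have hrabs : ∀ (k : Fin d → Fin Q) (s : ℝ),
        |(((Q:ℝ)^(-β) * T k) * (Q:ℝ)^(mord v)) * s| ≤ r * |s| := by
      intro k s
      have hT1 := hT k
      have habsT : |T k| ≤ 1 := abs_le.mpr ⟨hT1.1, hT1.2⟩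
      have h0 : (0:ℝ) < (Q:ℝ)^(-β) := Real.rpow_pos_of_pos hQR _
      have h2 : (0:ℝ) ≤ (Q:ℝ)^(mord v) := pow_nonneg hQR.le _
      rw [abs_mul, abs_mul, abs_mul, abs_of_pos h0, abs_of_nonneg h2]
      calc (Q:ℝ)^(-β) * |T k| * (Q:ℝ)^(mord v) * |s|
          ≤ (Q:ℝ)^(-β) * 1 * (Q:ℝ)^(mord v) * |s| := by
            have := abs_nonneg s
            gcongr
      _ = r * |s| := by rw [hr]; ring
    have hγ2 : (mord v : ℝ) + 1 ≤ (⌈β⌉:ℝ) := hmle v hv2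
    have hC : ENNReal.ofReal r * ENNReal.ofReal (Q:ℝ) ^ γ ≤ 1 := by
      rw [ENNReal.ofReal_rpow_of_pos hQR, ← ENNReal.ofReal_mul hr0]
      have hle1 : r * (Q:ℝ)^γ ≤ 1 := by
        have he : r * (Q:ℝ)^γ = (Q:ℝ)^(-β + (mord v:ℝ) + γ) := by
          rw [hr, ← Real.rpow_natCast (Q:ℝ) (mord v), ← Real.rpow_add hQR, ← Real.rpow_add hQR]
        rw [he]
        refine Real.rpow_le_one_of_one_le_of_nonpos hQ1 ?_
        rw [hγd]
        linarith
      exact le_trans (ENNReal.ofReal_le_ofReal hle1) (le_of_eq ENNReal.ofReal_one)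
    have hsplit : ∀ w w' : Fin d → ℝ, ENNReal.ofReal ((Q:ℝ) * e2 w w') ^ γ =
        ENNReal.ofReal (Q:ℝ) ^ γ * ENNReal.ofReal (e2 w w') ^ γ := by
      intro w w'
      rw [ENNReal.ofReal_mul hQR.le, ENNReal.mul_rpow_of_nonneg _ _ hγpos.le]
    have hkey : ∀ w w' : Fin d → ℝ, w ≠ w' → (∀ k, ‖y k w‖ ≤ ρ → (2⁻¹:ℝ) ≤ ‖y k w'‖) →
        ENNReal.ofReal |Dm v f w| ≤
          (ENNReal.ofReal r * ENNReal.ofReal (Q:ℝ) ^ γ) * BU * ENNReal.ofReal (e2 w w') ^ γ := by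
      intro w w' hww hfar
      rcases hdich w with h | ⟨k0, hk0⟩
      · rw [hzero v hvn w h]
        simp
      · have h12 := hfar k0 hk0
        rw [hsingle v hvn k0 w (lt_of_le_of_lt hk0 hρh')]
        have hφc : Continuous fun t : ℝ => ‖y k0 w + t • (y k0 w' - y k0 w)‖ :=
          (continuous_const.add (continuous_id.smul continuous_const)).norm
        have hmem : (ρ + 2⁻¹)/2 ∈ Set.Icc ((fun t : ℝ => ‖y k0 w + t • (y k0 w' - y k0 w)‖) 0)
            ((fun t : ℝ => ‖y k0 w + t • (y k0 w' - y k0 w)‖) 1) := by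
          have hcancel : y k0 w + (y k0 w' - y k0 w) = y k0 w' := by abel
          simp only [zero_smul, add_zero, one_smul, hcancel]
          constructor
          · linarith
          · linarith
        obtain ⟨t, ht, hφt⟩ := intermediate_value_Icc (by norm_num : (0:ℝ) ≤ 1)
          hφc.continuousOn hmem
        set w0 := y k0 w + t • (y k0 w' - y k0 w) with hw0
        have hnw0 : ‖w0‖ = (ρ + 2⁻¹)/2 := hφt
        have hρw0 : ρ < ‖w0‖ := by
          rw [hnw0]
          linarith
        have hDw0 : Dm v u w0 = 0 := hvan v w0 hρw0
        have hne0 : y k0 w ≠ w0 := by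
          intro h
          rw [← h] at hρw0
          exact absurd hρw0 (not_lt.mpr hk0)
        have he2w0 : e2 (y k0 w) w0 ≤ (Q:ℝ) * e2 w w' := by
          have h1 : e2 (y k0 w) w0 = |t| * e2 (y k0 w) (y k0 w') := by
            simp only [e2, hw0]
            rw [← Real.sqrt_sq_eq_abs, ← Real.sqrt_mul (sq_nonneg t)]
            congr 1
            rw [Finset.mul_sum]
            refine Finset.sum_congr rfl fun i _ => ?_
            simp only [Pi.add_apply, Pi.smul_apply, Pi.sub_apply, smul_eq_mul]
            ring
          rw [h1, he2scale k0 w w']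
          have hle : |t| ≤ 1 := by
            rw [abs_of_nonneg ht.1]
            exact ht.2
          have h2 := he2nn w w'
          have h3 : |t| * ((Q:ℝ) * e2 w w') ≤ 1 * ((Q:ℝ) * e2 w w') :=
            mul_le_mul_of_nonneg_right hle (mul_nonneg hQR.le h2)
          linarith
        have hq := hBUnum v ⟨hv1, hv2⟩ (y k0 w) w0 hne0
        rw [hDw0, sub_zero] at hq
        have hmono : ENNReal.ofReal (e2 (y k0 w) w0) ^ γ ≤
            ENNReal.ofReal ((Q:ℝ) * e2 w w') ^ γ :=
          ENNReal.rpow_le_rpow (ENNReal.ofReal_le_ofReal he2w0) hγpos.le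
        calc ENNReal.ofReal |((Q:ℝ)^(-β) * T k0) * (Q:ℝ)^(mord v) * Dm v u (y k0 w)|
            ≤ ENNReal.ofReal (r * |Dm v u (y k0 w)|) :=
              ENNReal.ofReal_le_ofReal (hrabs k0 _)
        _ = ENNReal.ofReal r * ENNReal.ofReal |Dm v u (y k0 w)| :=
              ENNReal.ofReal_mul hr0
        _ ≤ ENNReal.ofReal r * (BU * ENNReal.ofReal (e2 (y k0 w) w0) ^ γ) :=
              mul_le_mul_right hq _
        _ ≤ ENNReal.ofReal r *
              (BU * (ENNReal.ofReal (Q:ℝ) ^ γ * ENNReal.ofReal (e2 w w') ^ γ)) := by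
              refine mul_le_mul_right (mul_le_mul_right ?_ _) _
              rw [← hsplit w w']
              exact hmono
        _ = (ENNReal.ofReal r * ENNReal.ofReal (Q:ℝ) ^ γ) * BU *
              ENNReal.ofReal (e2 w w') ^ γ := by ring
    by_cases hcase : ∃ k, (‖y k x‖ ≤ ρ ∧ ‖y k z‖ < 2⁻¹) ∨ (‖y k z‖ ≤ ρ ∧ ‖y k x‖ < 2⁻¹)
    · obtain ⟨k, hk⟩ := hcase
      have hx2 : ‖y k x‖ < 2⁻¹ ∧ ‖y k z‖ < 2⁻¹ := by
        rcases hk with ⟨h1, h2⟩ | ⟨h1, h2⟩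
        · exact ⟨lt_of_le_of_lt h1 hρh', h2⟩
        · exact ⟨h2, lt_of_le_of_lt h1 hρh'⟩
      rw [hsingle v hvn k x hx2.1, hsingle v hvn k z hx2.2]
      refine (ENNReal.div_le_iff (hden x z hxz).1 (hden x z hxz).2).mpr ?_
      have hq := hBUnum v ⟨hv1, hv2⟩ (y k x) (y k z) (hyne k hxz)
      have heq : ((Q:ℝ)^(-β) * T k) * (Q:ℝ)^(mord v) * Dm v u (y k x) -
          ((Q:ℝ)^(-β) * T k) * (Q:ℝ)^(mord v) * Dm v u (y k z) =
          (((Q:ℝ)^(-β) * T k) * (Q:ℝ)^(mord v)) * (Dm v u (y k x) - Dm v u (y k z)) := by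
        ring
      rw [heq]
      calc ENNReal.ofReal |(((Q:ℝ)^(-β) * T k) * (Q:ℝ)^(mord v)) *
              (Dm v u (y k x) - Dm v u (y k z))|
          ≤ ENNReal.ofReal (r * |Dm v u (y k x) - Dm v u (y k z)|) :=
            ENNReal.ofReal_le_ofReal (hrabs k _)
      _ = ENNReal.ofReal r * ENNReal.ofReal |Dm v u (y k x) - Dm v u (y k z)| :=
            ENNReal.ofReal_mul hr0
      _ ≤ ENNReal.ofReal r * (BU * ENNReal.ofReal (e2 (y k x) (y k z)) ^ γ) :=
            mul_le_mul_right hq _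
      _ = ENNReal.ofReal r *
            (BU * (ENNReal.ofReal (Q:ℝ) ^ γ * ENNReal.ofReal (e2 x z) ^ γ)) := by
            rw [he2scale k x z, hsplit x z]
      _ = (ENNReal.ofReal r * ENNReal.ofReal (Q:ℝ) ^ γ) * BU * ENNReal.ofReal (e2 x z) ^ γ := by
            ring
      _ ≤ 1 * BU * ENNReal.ofReal (e2 x z) ^ γ :=
            mul_le_mul_left (mul_le_mul_left hC _) _
      _ = BU * ENNReal.ofReal (e2 x z) ^ γ := by rw [one_mul]
      _ ≤ 2 * BU * ENNReal.ofReal (e2 x z) ^ γ := by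
            refine mul_le_mul_left ?_ _
            calc BU = 1 * BU := (one_mul _).symm
            _ ≤ 2 * BU := mul_le_mul_left one_le_two _
    · push_neg at hcase
      have hx' := hkey x z hxz fun k hk => (hcase k).1 hk
      have hz' := hkey z x hxz.symm fun k hk => (hcase k).2 hk
      rw [he2sym z x] at hz'
      refine (ENNReal.div_le_iff (hden x z hxz).1 (hden x z hxz).2).mpr ?_
      calc ENNReal.ofReal |Dm v f x - Dm v f z|
          ≤ ENNReal.ofReal (|Dm v f x| + |Dm v f z|) :=
            ENNReal.ofReal_le_ofReal (abs_sub _ _)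
      _ ≤ ENNReal.ofReal |Dm v f x| + ENNReal.ofReal |Dm v f z| := ENNReal.ofReal_add_le
      _ ≤ (ENNReal.ofReal r * ENNReal.ofReal (Q:ℝ) ^ γ) * BU * ENNReal.ofReal (e2 x z) ^ γ +
            (ENNReal.ofReal r * ENNReal.ofReal (Q:ℝ) ^ γ) * BU * ENNReal.ofReal (e2 x z) ^ γ :=
            add_le_add hx' hz'
      _ = (ENNReal.ofReal r * ENNReal.ofReal (Q:ℝ) ^ γ) * (2 * BU) *
            ENNReal.ofReal (e2 x z) ^ γ := by ring
      _ ≤ 1 * (2 * BU) * ENNReal.ofReal (e2 x z) ^ γ :=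
            mul_le_mul_left (mul_le_mul_left hC _) _
      _ = 2 * BU * ENNReal.ofReal (e2 x z) ^ γ := by rw [one_mul]


end ZZS
end
end

section
/- Let d ∈ ℕ, ε ∈ (0,1/8], let Q be a Borel probability measure on [0,1]^d, and let A ⊂ [0,1]^d be Borel. Suppose Borel measurable functions η_1, η_2 : [0,1]^d → [0,1] satisfy η_1(x) = η_2(x) for all x ∈ [0,1]^d ∖ A and η_1(x), η_2(x) ∈ [1/2−ε, 1/2+ε] for all x ∈ A. Then KL(P_{η_1,Q} ‖ P_{η_2,Q}) ≤ 18·ε²·Q(A). -/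
open MeasureTheory ENNReal Set

noncomputable section

namespace ZZS

section KLHelpers

variable {d : ℕ}

lemma kernelMeas {η : (Fin d → ℝ) → ℝ} (hη : Measurable η) :
    Measurable (fun x => ENNReal.ofReal (η x) • Measure.dirac (x, (1 : ℝ)) +
      ENNReal.ofReal (1 - η x) • Measure.dirac (x, (-1 : ℝ))) := by
  apply Measure.measurable_of_measurable_coe
  intro s hs
  simp only [Measure.coe_add, Measure.coe_smul, Pi.add_apply, Pi.smul_apply, smul_eq_mul]
  have h1 : Measurable fun x : Fin d → ℝ => (x, (1 : ℝ)) :=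
    measurable_id.prodMk measurable_const
  have h2 : Measurable fun x : Fin d → ℝ => (x, (-1 : ℝ)) :=
    measurable_id.prodMk measurable_const
  apply Measurable.add
  · apply (ENNReal.measurable_ofReal.comp hη).mul
    simp_rw [Measure.dirac_apply' _ hs]
    exact (measurable_one.indicator hs).comp h1
  · apply (ENNReal.measurable_ofReal.comp (measurable_const.sub hη)).mul
    simp_rw [Measure.dirac_apply' _ hs]
    exact (measurable_one.indicator hs).comp h2

lemma lintegral_joint {η : (Fin d → ℝ) → ℝ} (hη : Measurable η) (Q : Measure (Fin d → ℝ))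
    {g : (Fin d → ℝ) × ℝ → ℝ≥0∞} (hg : Measurable g) :
    ∫⁻ z, g z ∂(jointMeasure η Q) =
      ∫⁻ x, ENNReal.ofReal (η x) * g (x, 1) + ENNReal.ofReal (1 - η x) * g (x, -1) ∂Q := by
  rw [jointMeasure, Measure.lintegral_bind (kernelMeas hη).aemeasurable hg.aemeasurable]
  congr 1
  ext x
  rw [lintegral_add_measure, lintegral_smul_measure, lintegral_smul_measure,
    lintegral_dirac' _ hg, lintegral_dirac' _ hg, smul_eq_mul, smul_eq_mul]

lemma joint_univ {η : (Fin d → ℝ) → ℝ} (hη : Measurable η) (Q : Measure (Fin d → ℝ))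
    [IsProbabilityMeasure Q] (hr : ∀ x, η x ∈ Set.Icc (0 : ℝ) 1) :
    jointMeasure η Q Set.univ = 1 := by
  have h := lintegral_joint hη Q (g := fun _ => (1 : ℝ≥0∞)) measurable_one
  simp only [lintegral_one] at h
  rw [h]
  have : ∀ x : Fin d → ℝ, ENNReal.ofReal (η x) * 1 + ENNReal.ofReal (1 - η x) * 1
      = (1 : ℝ≥0∞) := by
    intro x
    rw [mul_one, mul_one, ← ENNReal.ofReal_add (hr x).1 (by linarith [(hr x).2])]
    norm_num
  simp_rw [this]
  simp

end KLHelpers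

lemma bern_kl_bound {p q ε : ℝ} (hε0 : 0 < ε) (hε8 : ε ≤ 1/8)
    (a1 : 1/2 - ε ≤ p) (a2 : p ≤ 1/2 + ε) (b1 : 1/2 - ε ≤ q) (b2 : q ≤ 1/2 + ε) :
    q * (p / q * Real.log (p / q) - p / q + 1)
      + (1 - q) * ((1 - p) / (1 - q) * Real.log ((1 - p) / (1 - q))
          - (1 - p) / (1 - q) + 1) ≤ 18 * ε ^ 2 := by
  have hp3 : 3/8 ≤ p := by linarith
  have hp5 : p ≤ 5/8 := by linarith
  have hq3 : 3/8 ≤ q := by linarith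
  have hq5 : q ≤ 5/8 := by linarith
  have hq0 : q ≠ 0 := by linarith
  have hq1 : (1 : ℝ) - q ≠ 0 := by linarith
  have key : q * (p / q * Real.log (p / q) - p / q + 1)
      + (1 - q) * ((1 - p) / (1 - q) * Real.log ((1 - p) / (1 - q))
          - (1 - p) / (1 - q) + 1)
      = p * Real.log (p / q) + (1 - p) * Real.log ((1 - p) / (1 - q)) := by
    field_simp
    ring
  rw [key]
  have l1 : Real.log (p / q) ≤ p / q - 1 :=
    Real.log_le_sub_one_of_pos (div_pos (by linarith) (by linarith))
  have l2 : Real.log ((1 - p) / (1 - q)) ≤ (1 - p) / (1 - q) - 1 :=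
    Real.log_le_sub_one_of_pos (div_pos (by linarith) (by linarith))
  have t1 : p * Real.log (p / q) ≤ p * (p / q - 1) :=
    mul_le_mul_of_nonneg_left l1 (by linarith)
  have t2 : (1 - p) * Real.log ((1 - p) / (1 - q)) ≤ (1 - p) * ((1 - p) / (1 - q) - 1) :=
    mul_le_mul_of_nonneg_left l2 (by linarith)
  have e : p * (p / q - 1) + (1 - p) * ((1 - p) / (1 - q) - 1)
      = (p - q) ^ 2 / (q * (1 - q)) := by
    field_simp
    ring
  have hq15 : (15 : ℝ)/64 ≤ q * (1 - q) := by nlinarith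
  have hpq4 : (p - q) ^ 2 ≤ 4 * ε ^ 2 := by nlinarith
  have hf : (p - q) ^ 2 / (q * (1 - q)) ≤ 18 * ε ^ 2 := by
    rw [div_le_iff₀ (by nlinarith)]
    nlinarith [sq_nonneg ε]
  linarith

set_option maxHeartbeats 1000000 in
/-- Lemma 6.8 : KL-divergence bound between two joint laws. -/
theorem statement_14
    (d : ℕ) (hd : 0 < d) (ε : ℝ) (hε : ε ∈ Set.Ioc (0 : ℝ) (1 / 8))
    (Q : Measure (Fin d → ℝ)) (hQ : IsProbabilityMeasure Q) (hQc : Q (cube d) = 1)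
    (A : Set (Fin d → ℝ)) (hAm : MeasurableSet A) (hAc : A ⊆ cube d)
    (η₁ η₂ : (Fin d → ℝ) → ℝ) (h1m : Measurable η₁) (h2m : Measurable η₂)
    (h1r : ∀ x, η₁ x ∈ Set.Icc (0 : ℝ) 1) (h2r : ∀ x, η₂ x ∈ Set.Icc (0 : ℝ) 1)
    (heq : ∀ x ∈ cube d \ A, η₁ x = η₂ x)
    (hball : ∀ x ∈ A, η₁ x ∈ Set.Icc (1 / 2 - ε) (1 / 2 + ε) ∧
      η₂ x ∈ Set.Icc (1 / 2 - ε) (1 / 2 + ε)) :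
    KL (jointMeasure η₁ Q) (jointMeasure η₂ Q) ≤ ENNReal.ofReal (18 * ε ^ 2) * Q A := by
  classical
  obtain ⟨hε0, hε8⟩ := hε
  have hne : ¬ ((-1 : ℝ) = 1) := by norm_num
  set P₁ := jointMeasure η₁ Q with hP₁
  set P₂ := jointMeasure η₂ Q with hP₂
  set r : (Fin d → ℝ) × ℝ → ℝ := fun z =>
    if z.1 ∈ A then (if z.2 = 1 then η₁ z.1 / η₂ z.1 else (1 - η₁ z.1) / (1 - η₂ z.1)) else 1
    with hrdef
  have hAb : ∀ x ∈ A, 3/8 ≤ η₁ x ∧ η₁ x ≤ 5/8 ∧ 3/8 ≤ η₂ x ∧ η₂ x ≤ 5/8 := by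
    intro x hx
    obtain ⟨⟨a1, a2⟩, ⟨b1, b2⟩⟩ := hball x hx
    exact ⟨by linarith, by linarith, by linarith, by linarith⟩
  have hrb : ∀ z, 3/5 ≤ r z ∧ r z ≤ 5/3 := by
    intro z
    by_cases hz : z.1 ∈ A
    · obtain ⟨c1, c2, c3, c4⟩ := hAb z.1 hz
      by_cases hy : z.2 = 1
      · simp only [hrdef, hz, hy, if_true]
        constructor
        · rw [le_div_iff₀ (by linarith)]; linarith
        · rw [div_le_iff₀ (by linarith)]; linarith
      · simp only [hrdef, hz, hy, if_true, if_false]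
        constructor
        · rw [le_div_iff₀ (by linarith)]; linarith
        · rw [div_le_iff₀ (by linarith)]; linarith
    · simp only [hrdef, hz, if_false]
      norm_num
  have hr0 : ∀ z, 0 ≤ r z := fun z => le_trans (by norm_num) (hrb z).1
  have hrm : Measurable r := by
    apply Measurable.ite (hAm.preimage measurable_fst)
    · apply Measurable.ite ((measurableSet_singleton (1 : ℝ)).preimage measurable_snd)
      · exact (h1m.comp measurable_fst).div (h2m.comp measurable_fst)
      · exact (measurable_const.sub (h1m.comp measurable_fst)).div
          (measurable_const.sub (h2m.comp measurable_fst))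
    · exact measurable_const
  set ρ : (Fin d → ℝ) × ℝ → ℝ≥0∞ := fun z => ENNReal.ofReal (r z) with hρdef
  have hρm : Measurable ρ := ENNReal.measurable_ofReal.comp hrm
  have hcube : MeasurableSet (cube d) := MeasurableSet.univ_pi fun _ => measurableSet_Icc
  have hae : ∀ᵐ x ∂Q, x ∈ cube d := by
    rw [ae_iff]
    have h' : {x | ¬ x ∈ cube d} = (cube d)ᶜ := rfl
    rw [h', measure_compl hcube (measure_ne_top Q _), hQc, measure_univ, tsub_self]
  haveI : IsProbabilityMeasure P₁ := ⟨joint_univ h1m Q h1r⟩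
  haveI : IsProbabilityMeasure P₂ := ⟨joint_univ h2m Q h2r⟩
  -- the density identity
  have hWD : P₁ = P₂.withDensity ρ := by
    ext s hs
    rw [withDensity_apply _ hs, ← lintegral_indicator hs, ← lintegral_indicator_one hs,
      hP₁, hP₂, lintegral_joint h1m Q ((measurable_one (α := ℝ≥0∞)).indicator hs),
      lintegral_joint h2m Q (hρm.indicator hs)]
    refine lintegral_congr_ae ?_
    filter_upwards [hae] with x hx
    by_cases hxA : x ∈ A
    · obtain ⟨c1, c2, c3, c4⟩ := hAb x hxA
      have hq0 : η₂ x ≠ 0 := by linarith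
      have hq1 : (1 : ℝ) - η₂ x ≠ 0 := by linarith
      have k1 : ENNReal.ofReal (η₂ x) * ENNReal.ofReal (η₁ x / η₂ x)
          = ENNReal.ofReal (η₁ x) := by
        rw [← ENNReal.ofReal_mul (by linarith)]
        congr 1
        field_simp
      have k2 : ENNReal.ofReal (1 - η₂ x) * ENNReal.ofReal ((1 - η₁ x) / (1 - η₂ x))
          = ENNReal.ofReal (1 - η₁ x) := by
        rw [← ENNReal.ofReal_mul (by linarith)]
        congr 1
        field_simp
      have hr1 : r (x, 1) = η₁ x / η₂ x := by simp [hrdef, hxA]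
      have hr2 : r (x, -1) = (1 - η₁ x) / (1 - η₂ x) := by simp [hrdef, hxA, hne]
      by_cases h1s : ((x, (1 : ℝ)) ∈ s) <;> by_cases h2s : ((x, (-1 : ℝ)) ∈ s) <;>
        simp [Set.indicator_apply, h1s, h2s, hρdef, hr1, hr2, k1, k2]
    · have hxe : η₁ x = η₂ x := heq x ⟨hx, hxA⟩
      have hr1 : r (x, 1) = 1 := by simp [hrdef, hxA]
      have hr2 : r (x, -1) = 1 := by simp [hrdef, hxA]
      by_cases h1s : ((x, (1 : ℝ)) ∈ s) <;> by_cases h2s : ((x, (-1 : ℝ)) ∈ s) <;>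
        simp [Set.indicator_apply, h1s, h2s, hρdef, hr1, hr2, hxe]
  have hac : P₁ ≪ P₂ := by rw [hWD]; exact withDensity_absolutelyContinuous _ _
  have hrn : P₁.rnDeriv P₂ =ᵐ[P₂] ρ := by
    rw [hWD]; exact Measure.rnDeriv_withDensity P₂ hρm
  have hrn1 : P₁.rnDeriv P₂ =ᵐ[P₁] ρ := hrn.filter_mono hac.ae_le
  have hlcong : (fun z => Real.log ((P₁.rnDeriv P₂ z)).toReal) =ᵐ[P₁]
      fun z => Real.log (r z) := by
    filter_upwards [hrn1] with z hz
    rw [hz, hρdef]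
    simp [ENNReal.toReal_ofReal (hr0 z)]
  have hlogb : ∀ z, |Real.log (r z)| ≤ 1 := by
    intro z
    obtain ⟨hl, hu⟩ := hrb z
    have hpos : 0 < r z := by linarith
    have e1 : Real.log (r z) ≤ r z - 1 := Real.log_le_sub_one_of_pos hpos
    have e2 : Real.log (r z)⁻¹ ≤ (r z)⁻¹ - 1 := Real.log_le_sub_one_of_pos (by positivity)
    rw [Real.log_inv] at e2
    have e3 : (r z)⁻¹ ≤ (3/5 : ℝ)⁻¹ := inv_anti₀ (by norm_num) hl
    rw [abs_le]
    constructor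
    · norm_num at e3; linarith
    · linarith
  have hglm : Measurable fun z => Real.log (r z) := Real.measurable_log.comp hrm
  have hglInt : Integrable (fun z => Real.log (r z)) P₁ :=
    Integrable.mono' (integrable_const 1) hglm.aestronglyMeasurable (ae_of_all _ hlogb)
  have hrnInt : Integrable (fun z => Real.log ((P₁.rnDeriv P₂ z)).toReal) P₁ :=
    hglInt.congr hlcong.symm
  rw [KL, if_pos ⟨hac, hrnInt⟩]
  have hIeq : ∫ z, Real.log ((P₁.rnDeriv P₂ z)).toReal ∂P₁ = ∫ z, Real.log (r z) ∂P₁ :=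
    integral_congr_ae hlcong
  have hnnm : Measurable fun z => Real.toNNReal (r z) := hrm.real_toNNReal
  have hWD' : P₁ = P₂.withDensity fun z => ((r z).toNNReal : ℝ≥0∞) := hWD
  have hI2 : ∫ z, Real.log (r z) ∂P₁ = ∫ z, r z * Real.log (r z) ∂P₂ := by
    rw [hWD', integral_withDensity_eq_integral_smul hnnm]
    congr 1
    ext z
    simp [NNReal.smul_def, Real.coe_toNNReal _ (hr0 z)]
  have hrInt : Integrable r P₂ :=
    Integrable.mono' (integrable_const (5/3)) hrm.aestronglyMeasurable
      (ae_of_all _ fun z => by rw [Real.norm_eq_abs, abs_of_nonneg (hr0 z)]; exact (hrb z).2)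
  have hrmass : ∫ z, r z ∂P₂ = 1 := by
    rw [integral_eq_lintegral_of_nonneg_ae (ae_of_all _ hr0) hrm.aestronglyMeasurable]
    have h' : ∫⁻ z, ENNReal.ofReal (r z) ∂P₂ = P₁ Set.univ := by
      rw [hWD, withDensity_apply _ MeasurableSet.univ, Measure.restrict_univ]
    rw [h', measure_univ]
    simp
  have hh0 : ∀ z, 0 ≤ r z * Real.log (r z) - r z + 1 := by
    intro z
    have hl := (hrb z).1
    have hpos : 0 < r z := by linarith
    have e2 : Real.log (r z)⁻¹ ≤ (r z)⁻¹ - 1 := Real.log_le_sub_one_of_pos (by positivity)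
    rw [Real.log_inv] at e2
    nlinarith [mul_le_mul_of_nonneg_left e2 hpos.le, mul_inv_cancel₀ (ne_of_gt hpos)]
  have hrlInt : Integrable (fun z => r z * Real.log (r z)) P₂ :=
    Integrable.mono' (integrable_const 2) (hrm.mul hglm).aestronglyMeasurable
      (ae_of_all _ fun z => by
        rw [Real.norm_eq_abs, abs_mul, abs_of_nonneg (hr0 z)]
        nlinarith [(hrb z).2, hr0 z, abs_nonneg (Real.log (r z)), hlogb z])
  have hI3 : ∫ z, r z * Real.log (r z) ∂P₂
      = ∫ z, (r z * Real.log (r z) - r z + 1) ∂P₂ := by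
    have e1 : ∫ z, (r z * Real.log (r z) - r z + 1) ∂P₂
        = ∫ z, (r z * Real.log (r z) - r z) ∂P₂ + ∫ _z, (1 : ℝ) ∂P₂ :=
      integral_add (hrlInt.sub hrInt) (integrable_const 1)
    have e2 : ∫ z, (r z * Real.log (r z) - r z) ∂P₂
        = ∫ z, r z * Real.log (r z) ∂P₂ - ∫ z, r z ∂P₂ := integral_sub hrlInt hrInt
    have e3 : ∫ _z, (1 : ℝ) ∂P₂ = 1 := by simp
    rw [e1, e2, e3, hrmass]
    ring
  have hhm : Measurable fun z => r z * Real.log (r z) - r z + 1 :=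
    ((hrm.mul hglm).sub hrm).add measurable_const
  have hI4 : ∫ z, (r z * Real.log (r z) - r z + 1) ∂P₂
      = (∫⁻ z, ENNReal.ofReal (r z * Real.log (r z) - r z + 1) ∂P₂).toReal := by
    rw [integral_eq_lintegral_of_nonneg_ae (ae_of_all _ hh0) hhm.aestronglyMeasurable]
  have hHm : Measurable fun z => ENNReal.ofReal (r z * Real.log (r z) - r z + 1) :=
    ENNReal.measurable_ofReal.comp hhm
  have hlb : ∫⁻ z, ENNReal.ofReal (r z * Real.log (r z) - r z + 1) ∂P₂
      ≤ ENNReal.ofReal (18 * ε ^ 2) * Q A := by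
    rw [hP₂, lintegral_joint h2m Q hHm]
    have hptw : ∀ x, ENNReal.ofReal (η₂ x) *
          ENNReal.ofReal (r (x, 1) * Real.log (r (x, 1)) - r (x, 1) + 1)
        + ENNReal.ofReal (1 - η₂ x) *
          ENNReal.ofReal (r (x, -1) * Real.log (r (x, -1)) - r (x, -1) + 1)
        ≤ A.indicator (fun _ => ENNReal.ofReal (18 * ε ^ 2)) x := by
      intro x
      by_cases hxA : x ∈ A
      · obtain ⟨c1, c2, c3, c4⟩ := hAb x hxA
        obtain ⟨⟨a1, a2⟩, ⟨b1, b2⟩⟩ := hball x hxA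
        have hq0 : η₂ x ≠ 0 := by linarith
        have hq1 : (1 : ℝ) - η₂ x ≠ 0 := by linarith
        have hr1 : r (x, 1) = η₁ x / η₂ x := by simp [hrdef, hxA]
        have hr2 : r (x, -1) = (1 - η₁ x) / (1 - η₂ x) := by simp [hrdef, hxA, hne]
        have hh1 := hh0 (x, 1)
        have hh2 := hh0 (x, -1)
        rw [hr1] at hh1
        rw [hr2] at hh2
        rw [hr1, hr2, Set.indicator_of_mem hxA,
          ← ENNReal.ofReal_mul (by linarith : (0:ℝ) ≤ η₂ x),
          ← ENNReal.ofReal_mul (by linarith : (0:ℝ) ≤ 1 - η₂ x),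
          ← ENNReal.ofReal_add (mul_nonneg (by linarith) hh1) (mul_nonneg (by linarith) hh2)]
        apply ENNReal.ofReal_le_ofReal
        exact bern_kl_bound hε0 hε8 a1 a2 b1 b2
      · have hr1 : r (x, 1) = 1 := by simp [hrdef, hxA]
        have hr2 : r (x, -1) = 1 := by simp [hrdef, hxA]
        simp [hr1, hr2, Set.indicator_of_notMem hxA]
    calc ∫⁻ x, ENNReal.ofReal (η₂ x) *
            ENNReal.ofReal (r (x, 1) * Real.log (r (x, 1)) - r (x, 1) + 1)
          + ENNReal.ofReal (1 - η₂ x) *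
            ENNReal.ofReal (r (x, -1) * Real.log (r (x, -1)) - r (x, -1) + 1) ∂Q
        ≤ ∫⁻ x, A.indicator (fun _ => ENNReal.ofReal (18 * ε ^ 2)) x ∂Q :=
          lintegral_mono hptw
      _ = ENNReal.ofReal (18 * ε ^ 2) * Q A := by
          rw [lintegral_indicator hAm]
          simp [Measure.restrict_apply]
  rw [hIeq, hI2, hI3, hI4]
  have hne' : ENNReal.ofReal (18 * ε ^ 2) * Q A ≠ ⊤ :=
    ENNReal.mul_ne_top ENNReal.ofReal_ne_top (measure_ne_top Q A)
  calc ENNReal.ofReal ((∫⁻ z, ENNReal.ofReal (r z * Real.log (r z) - r z + 1) ∂P₂).toReal)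
      ≤ ENNReal.ofReal ((ENNReal.ofReal (18 * ε ^ 2) * Q A).toReal) :=
        ENNReal.ofReal_le_ofReal (ENNReal.toReal_mono hne' hlb)
    _ = ENNReal.ofReal (18 * ε ^ 2) * Q A := ENNReal.ofReal_toReal hne' 


end ZZS
end
end

section
/- Define J : [0,1]² → ℝ by J(x,y) := min{x+y, 2−x−y} − min{x, 1−x} − min{y, 1−y}. Then: (i) J(x,y) = J(y,x) ≥ 0 for all x, y ∈ [0,1]; (ii) J(1/2−ε, 1/2+ε) = J(1/2+ε, 1/2−ε) = 2ε for all ε ∈ (0,1/2]; and (iii) for every d ∈ ℕ, every Borel probability measure Q on [0,1]^d, and all Borel measurable η_1, η_2 : [0,1]^d → [0,1], ∫ J(η_1(x), η_2(x)) dQ(x) ≤ inf over all measurable f : [0,1]^d → ℝ of (E_{P_{η_1,Q}}(f) + E_{P_{η_2,Q}}(f)). -/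
open MeasureTheory ENNReal Set

noncomputable section

namespace ZZS

/-- The function `J` of Lemma 6.9. -/
def Jfun (x y : ℝ) : ℝ := min (x + y) (2 - x - y) - min x (1 - x) - min y (1 - y)

lemma joint_risk {d : ℕ} (Q : Measure (Fin d → ℝ)) [IsProbabilityMeasure Q]
    {η f : (Fin d → ℝ) → ℝ} (hη : Measurable η) (hη01 : ∀ x, η x ∈ Set.Icc (0:ℝ) 1)
    (hf : Measurable f) :
    risk01 (jointMeasure η Q) f = ∫ x, (if 0 ≤ f x then 1 - η x else η x) ∂Q := by
  have hS : MeasurableSet {p : (Fin d → ℝ) × ℝ | sgn (f p.1) ≠ p.2} := by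
    have hg : Measurable fun p : (Fin d → ℝ) × ℝ => sgn (f p.1) := by
      unfold sgn
      exact Measurable.ite (measurableSet_le measurable_const (hf.comp measurable_fst))
        measurable_const measurable_const
    exact (measurableSet_eq_fun hg measurable_snd).compl
  have hker : Measurable fun x : Fin d → ℝ =>
      (ENNReal.ofReal (η x) • Measure.dirac (x, (1:ℝ)) +
        ENNReal.ofReal (1 - η x) • Measure.dirac (x, (-1:ℝ))) := by
    apply Measure.measurable_of_measurable_coe
    intro s hs
    simp only [Measure.coe_add, Pi.add_apply, Measure.smul_apply, smul_eq_mul,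
      Measure.dirac_apply' _ hs]
    have m1 : Measurable fun x : Fin d → ℝ => s.indicator (1 : ((Fin d → ℝ) × ℝ) → ℝ≥0∞) (x, (1:ℝ)) := by
      have : (fun x : Fin d → ℝ => s.indicator (1 : ((Fin d → ℝ) × ℝ) → ℝ≥0∞) (x, (1:ℝ)))
          = ((fun x : Fin d → ℝ => (x, (1:ℝ))) ⁻¹' s).indicator (fun _ => 1) := by
        ext x; by_cases h : (x, (1:ℝ)) ∈ s <;> simp [h]
      rw [this]
      exact measurable_const.indicator ((measurable_id.prodMk measurable_const) hs)
    have m2 : Measurable fun x : Fin d → ℝ => s.indicator (1 : ((Fin d → ℝ) × ℝ) → ℝ≥0∞) (x, (-1:ℝ)) := by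
      have : (fun x : Fin d → ℝ => s.indicator (1 : ((Fin d → ℝ) × ℝ) → ℝ≥0∞) (x, (-1:ℝ)))
          = ((fun x : Fin d → ℝ => (x, (-1:ℝ))) ⁻¹' s).indicator (fun _ => 1) := by
        ext x; by_cases h : (x, (-1:ℝ)) ∈ s <;> simp [h]
      rw [this]
      exact measurable_const.indicator ((measurable_id.prodMk measurable_const) hs)
    exact ((ENNReal.measurable_ofReal.comp hη).mul m1).add
      ((ENNReal.measurable_ofReal.comp (measurable_const.sub hη)).mul m2)
  have key : ∀ x : Fin d → ℝ,
      (ENNReal.ofReal (η x) • Measure.dirac (x,(1:ℝ)) +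
        ENNReal.ofReal (1 - η x) • Measure.dirac (x,(-1:ℝ)))
        {p : (Fin d → ℝ) × ℝ | sgn (f p.1) ≠ p.2}
      = ENNReal.ofReal (if 0 ≤ f x then 1 - η x else η x) := by
    intro x
    simp only [Measure.coe_add, Pi.add_apply, Measure.smul_apply, smul_eq_mul,
      Measure.dirac_apply' _ hS]
    by_cases h : 0 ≤ f x
    · have e1 : (x, (1:ℝ)) ∉ {p : (Fin d → ℝ) × ℝ | sgn (f p.1) ≠ p.2} := by
        simp [sgn, h]
      have e2 : (x, (-1:ℝ)) ∈ {p : (Fin d → ℝ) × ℝ | sgn (f p.1) ≠ p.2} := by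
        norm_num [sgn, h]
      simp [Set.indicator_of_notMem e1, Set.indicator_of_mem e2, h]
    · have e1 : (x, (1:ℝ)) ∈ {p : (Fin d → ℝ) × ℝ | sgn (f p.1) ≠ p.2} := by
        norm_num [sgn, h]
      have e2 : (x, (-1:ℝ)) ∉ {p : (Fin d → ℝ) × ℝ | sgn (f p.1) ≠ p.2} := by
        simp [sgn, h]
      simp [Set.indicator_of_mem e1, Set.indicator_of_notMem e2, h]
  have hmeas : Measurable fun x => (if 0 ≤ f x then 1 - η x else η x) :=
    Measurable.ite (measurableSet_le measurable_const hf) (measurable_const.sub hη) hη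
  rw [risk01, jointMeasure, Measure.bind_apply hS hker.aemeasurable, lintegral_congr key,
    integral_eq_lintegral_of_nonneg_ae (Filter.Eventually.of_forall fun x => by
      by_cases h : 0 ≤ f x
      · simp only [Pi.zero_apply, if_pos h]; linarith [(hη01 x).2]
      · simp only [Pi.zero_apply, if_neg h]; exact (hη01 x).1) hmeas.aestronglyMeasurable]

lemma joint_bayes {d : ℕ} (Q : Measure (Fin d → ℝ)) [IsProbabilityMeasure Q]
    {η : (Fin d → ℝ) → ℝ} (hη : Measurable η) (hη01 : ∀ x, η x ∈ Set.Icc (0:ℝ) 1) :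
    bayes01 (jointMeasure η Q) ≤ ∫ x, min (η x) (1 - η x) ∂Q := by
  have hbd : BddBelow (Set.range fun g : {g : (Fin d → ℝ) → ℝ // Measurable g} =>
      risk01 (jointMeasure η Q) g.1) := by
    refine ⟨0, ?_⟩
    rintro r ⟨g, rfl⟩
    exact ENNReal.toReal_nonneg
  have h2 : bayes01 (jointMeasure η Q) ≤ risk01 (jointMeasure η Q) (fun x => η x - 1/2) :=
    ciInf_le hbd ⟨_, hη.sub measurable_const⟩
  refine h2.trans (le_of_eq ?_)
  rw [joint_risk (f := fun x => η x - 1/2) Q hη hη01 (hη.sub measurable_const)]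
  refine integral_congr_ae (Filter.Eventually.of_forall fun x => ?_)
  show (if 0 ≤ η x - 1/2 then 1 - η x else η x) = min (η x) (1 - η x)
  by_cases h : 0 ≤ η x - 1/2
  · rw [if_pos h, min_eq_right (by linarith)]
  · rw [if_neg h, min_eq_left (by linarith)]

lemma key_ineq {d : ℕ} (Q : Measure (Fin d → ℝ)) [IsProbabilityMeasure Q]
    {η₁ η₂ f : (Fin d → ℝ) → ℝ} (hη₁ : Measurable η₁) (hη₂ : Measurable η₂)
    (h1 : ∀ x, η₁ x ∈ Set.Icc (0:ℝ) 1) (h2 : ∀ x, η₂ x ∈ Set.Icc (0:ℝ) 1)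
    (hf : Measurable f) :
    (∫ x, Jfun (η₁ x) (η₂ x) ∂Q) ≤
      excess01 (jointMeasure η₁ Q) f + excess01 (jointMeasure η₂ Q) f := by
  have hint : ∀ g : (Fin d → ℝ) → ℝ, Measurable g → (∀ x, |g x| ≤ 4) → Integrable g Q :=
    fun g hg hb => (integrable_const (4:ℝ)).mono' hg.aestronglyMeasurable
      (Filter.Eventually.of_forall fun x => by simpa [Real.norm_eq_abs] using hb x)
  have hmr₁ : Measurable fun x => if 0 ≤ f x then 1 - η₁ x else η₁ x :=
    Measurable.ite (measurableSet_le measurable_const hf) (measurable_const.sub hη₁) hη₁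
  have hmr₂ : Measurable fun x => if 0 ≤ f x then 1 - η₂ x else η₂ x :=
    Measurable.ite (measurableSet_le measurable_const hf) (measurable_const.sub hη₂) hη₂
  have hmm₁ : Measurable fun x => min (η₁ x) (1 - η₁ x) := hη₁.min (measurable_const.sub hη₁)
  have hmm₂ : Measurable fun x => min (η₂ x) (1 - η₂ x) := hη₂.min (measurable_const.sub hη₂)
  have hmJ : Measurable fun x => Jfun (η₁ x) (η₂ x) := by
    simp only [Jfun]
    exact (((hη₁.add hη₂).min ((measurable_const.sub hη₁).sub hη₂)).sub hmm₁).sub hmm₂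
  have hbm : ∀ a : ℝ, a ∈ Set.Icc (0:ℝ) 1 → |min a (1 - a)| ≤ 4 := by
    rintro a ⟨ha0, ha1⟩
    rw [abs_le]
    constructor
    · have := le_min ha0 (by linarith : (0:ℝ) ≤ 1 - a); linarith
    · have := min_le_left a (1 - a); linarith
  have hbr : ∀ (η : (Fin d → ℝ) → ℝ), (∀ x, η x ∈ Set.Icc (0:ℝ) 1) →
      ∀ x, |if 0 ≤ f x then 1 - η x else η x| ≤ 4 := by
    intro η hη01 x
    obtain ⟨ha0, ha1⟩ := hη01 x
    rw [abs_le]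
    by_cases h : 0 ≤ f x <;> simp only [if_pos, if_neg, h, if_true, if_false] <;>
      constructor <;> linarith
  have hbJ : ∀ x, |Jfun (η₁ x) (η₂ x)| ≤ 4 := by
    intro x
    obtain ⟨a0, a1⟩ := h1 x; obtain ⟨b0, b1⟩ := h2 x
    simp only [Jfun]
    rw [abs_le]
    have hA1 := min_le_left (η₁ x + η₂ x) (2 - η₁ x - η₂ x)
    have hA0 : (0:ℝ) ≤ min (η₁ x + η₂ x) (2 - η₁ x - η₂ x) :=
      le_min (by linarith) (by linarith)
    have hB1 := min_le_left (η₁ x) (1 - η₁ x)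
    have hB0 : (0:ℝ) ≤ min (η₁ x) (1 - η₁ x) := le_min a0 (by linarith)
    have hC1 := min_le_left (η₂ x) (1 - η₂ x)
    have hC0 : (0:ℝ) ≤ min (η₂ x) (1 - η₂ x) := le_min b0 (by linarith)
    constructor <;> linarith
  have iJ := hint _ hmJ hbJ
  have ir₁ := hint _ hmr₁ (hbr η₁ h1)
  have ir₂ := hint _ hmr₂ (hbr η₂ h2)
  have im₁ := hint _ hmm₁ (fun x => hbm _ (h1 x))
  have im₂ := hint _ hmm₂ (fun x => hbm _ (h2 x))
  have hpt : ∀ x, Jfun (η₁ x) (η₂ x) ≤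
      ((if 0 ≤ f x then 1 - η₁ x else η₁ x) - min (η₁ x) (1 - η₁ x)) +
      ((if 0 ≤ f x then 1 - η₂ x else η₂ x) - min (η₂ x) (1 - η₂ x)) := by
    intro x
    simp only [Jfun]
    by_cases h : 0 ≤ f x
    · simp only [if_pos h]
      have := min_le_right (η₁ x + η₂ x) (2 - η₁ x - η₂ x); linarith
    · simp only [if_neg h]
      have := min_le_left (η₁ x + η₂ x) (2 - η₁ x - η₂ x); linarith
  have hIM := integral_mono iJ ((ir₁.sub im₁).add (ir₂.sub im₂)) hpt
  simp only [Pi.add_apply, Pi.sub_apply] at hIM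
  have is₁ : Integrable (fun x =>
      (if 0 ≤ f x then 1 - η₁ x else η₁ x) - min (η₁ x) (1 - η₁ x)) Q := ir₁.sub im₁
  have is₂ : Integrable (fun x =>
      (if 0 ≤ f x then 1 - η₂ x else η₂ x) - min (η₂ x) (1 - η₂ x)) Q := ir₂.sub im₂
  rw [integral_add is₁ is₂, integral_sub ir₁ im₁, integral_sub ir₂ im₂] at hIM
  have e₁ := joint_bayes Q hη₁ h1
  have e₂ := joint_bayes Q hη₂ h2
  have f₁ := joint_risk Q hη₁ h1 hf
  have f₂ := joint_risk Q hη₂ h2 hf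
  simp only [excess01]
  rw [f₁, f₂]
  linarith

/-- Lemma 6.9. -/
theorem statement_15 :
    (∀ x ∈ Set.Icc (0 : ℝ) 1, ∀ y ∈ Set.Icc (0 : ℝ) 1,
        Jfun x y = Jfun y x ∧ 0 ≤ Jfun x y) ∧
      (∀ ε : ℝ, ε ∈ Set.Ioc (0 : ℝ) (1 / 2) →
        Jfun (1 / 2 - ε) (1 / 2 + ε) = 2 * ε ∧ Jfun (1 / 2 + ε) (1 / 2 - ε) = 2 * ε) ∧
      ∀ (d : ℕ), 0 < d → ∀ Q : Measure (Fin d → ℝ), IsProbabilityMeasure Q →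
        Q (cube d) = 1 →
        ∀ η₁ η₂ : (Fin d → ℝ) → ℝ, Measurable η₁ → Measurable η₂ →
          (∀ x, η₁ x ∈ Set.Icc (0 : ℝ) 1) → (∀ x, η₂ x ∈ Set.Icc (0 : ℝ) 1) →
          (∫ x, Jfun (η₁ x) (η₂ x) ∂Q) ≤
            ⨅ f : {f : (Fin d → ℝ) → ℝ // Measurable f},
              (excess01 (jointMeasure η₁ Q) f.1 + excess01 (jointMeasure η₂ Q) f.1) := by
  refine ⟨?_, ?_, ?_⟩
  · intro x _ y _
    constructor
    · have h1 : x + y = y + x := by ring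
      have h2 : 2 - x - y = 2 - y - x := by ring
      unfold Jfun; rw [h1, h2]; ring
    · unfold Jfun
      have ha := min_le_left x (1 - x)
      have hb := min_le_right x (1 - x)
      have hc := min_le_left y (1 - y)
      have hd := min_le_right y (1 - y)
      have he : min x (1-x) + min y (1-y) ≤ min (x+y) (2 - x - y) :=
        le_min (by linarith) (by linarith)
      linarith
  · rintro ε ⟨hε0, hε1⟩
    constructor
    · unfold Jfun
      rw [min_eq_left (by linarith), min_eq_left (by linarith), min_eq_right (by linarith)]
      ring
    · unfold Jfun
      rw [min_eq_left (by linarith), min_eq_right (by linarith), min_eq_left (by linarith)]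
      ring
  · intro d _ Q hQprob _ η₁ η₂ hη₁ hη₂ h1 h2
    haveI := hQprob
    haveI : Nonempty {f : (Fin d → ℝ) → ℝ // Measurable f} :=
      ⟨⟨fun _ => 0, measurable_const⟩⟩
    apply le_ciInf
    rintro ⟨f, hf⟩
    exact key_ineq Q hη₁ hη₂ h1 h2 hf

end ZZS
end
end
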